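/- arXiv:1606.03898 — 7 statements merged into one kernel-verified Lean document; each statement's English description precedes it below -/
import Mathlib

section
/- Let N be a network on a finite set V with |V| ≥ 2, and let x, y, z ∈ V be pairwise distinct. Then the maximum flow value from x to z is at least the minimum of the maximum flow value from x to y and the maximum flow value from y to z: φ_{xz} ≥ min{φ_{xy}, φ_{yz}}. -/
/-- A flow from `s` to `t` in the network with capacity `c`: bounded by the
capacity on every arc and conserving flow at every vertex other than `s`, `t`. -/
def IsFlow {V : Type*} [Fintype V] [DecidableEq V]
    (c : V → V → ℕ) (s t : V) (f : V → V → ℕ) : Prop :=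
  (∀ x y : V, x ≠ y → f x y ≤ c x y) ∧
  ∀ x : V, x ≠ s → x ≠ t →
    ∑ y ∈ Finset.univ.erase x, f x y = ∑ y ∈ Finset.univ.erase x, f y x

/-- The value of a flow `f` from `s`: outflow of `s` minus inflow of `s`. -/
def flowValue {V : Type*} [Fintype V] [DecidableEq V]
    (f : V → V → ℕ) (s : V) : ℤ :=
  (∑ y ∈ Finset.univ.erase s, (f s y : ℤ)) -
    ∑ y ∈ Finset.univ.erase s, (f y s : ℤ)

/-- The maximum flow value `φ_{st}` from `s` to `t` in the network `c`. -/
noncomputable def maxFlow {V : Type*} [Fintype V] [DecidableEq V]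
    (c : V → V → ℕ) (s t : V) : ℕ :=
  sSup {n : ℕ | ∃ f : V → V → ℕ, IsFlow c s t f ∧ flowValue f s = (n : ℤ)}

/-- The flow relation `𝔉(N)`: `x ⪰ y` iff `x = y` or `x ≠ y` and `φ_{xy} ≥ φ_{yx}`. -/
def FlowRel {V : Type*} [Fintype V] [DecidableEq V]
    (c : V → V → ℕ) (x y : V) : Prop :=
  x = y ∨ (x ≠ y ∧ maxFlow c y x ≤ maxFlow c x y)

/-- A relation is complete if any two elements are comparable. -/
def CompleteRel {V : Type*} (R : V → V → Prop) : Prop :=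
  ∀ x y : V, R x y ∨ R y x

/-- The strict part `S(R)` of a relation `R`. -/
def StrictPart {V : Type*} (R : V → V → Prop) (x y : V) : Prop :=
  R x y ∧ ¬ R y x

/-- A relation is quasi-transitive if its strict part is transitive. -/
def QuasiTransitive {V : Type*} (R : V → V → Prop) : Prop :=
  Transitive (StrictPart R)

/-- The outdegree of `x` in the network `c`. -/
def outdeg {V : Type*} [Fintype V] [DecidableEq V] (c : V → V → ℕ) (x : V) : ℕ :=
  ∑ y ∈ Finset.univ.erase x, c x y

/-- The indegree of `x` in the network `c`. -/
def indeg {V : Type*} [Fintype V] [DecidableEq V] (c : V → V → ℕ) (x : V) : ℕ :=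
  ∑ y ∈ Finset.univ.erase x, c y x

section Aux

set_option linter.unusedSectionVars false

variable {V : Type*} [Fintype V] [DecidableEq V]

/-- Divergence (net outflow) of `g` at `v`, as an integer. -/
def divg (g : V → V → ℕ) (v : V) : ℤ :=
  (∑ w ∈ Finset.univ.erase v, (g v w : ℤ)) - ∑ w ∈ Finset.univ.erase v, (g w v : ℤ)

lemma flowValue_eq_divg (f : V → V → ℕ) (s : V) : flowValue f s = divg f s := rfl

lemma divg_eq_sum (g : V → V → ℕ) (v : V) :
    divg g v = ∑ w ∈ Finset.univ, ((g v w : ℤ) - g w v) := by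
  rw [divg, ← Finset.sum_sub_distrib]
  exact Finset.sum_erase (f := fun w => ((g v w : ℤ) - g w v)) Finset.univ (sub_self _)

/-- Capacity of the cut `S`. -/
def cutCap (c : V → V → ℕ) (S : Finset V) : ℕ :=
  ∑ u ∈ S, ∑ v ∈ Sᶜ, c u v

lemma sum_divg (g : V → V → ℕ) (S : Finset V) :
    ∑ u ∈ S, divg g u = ∑ u ∈ S, ∑ v ∈ Sᶜ, ((g u v : ℤ) - g v u) := by
  have h1 : ∑ u ∈ S, divg g u
      = ∑ u ∈ S, (∑ v ∈ S, ((g u v : ℤ) - g v u) + ∑ v ∈ Sᶜ, ((g u v : ℤ) - g v u)) := by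
    refine Finset.sum_congr rfl fun u _ => ?_
    rw [divg_eq_sum, Finset.sum_add_sum_compl]
  rw [h1, Finset.sum_add_distrib]
  have h2 : ∑ u ∈ S, ∑ v ∈ S, ((g u v : ℤ) - g v u) = 0 := by
    have := Finset.sum_comm (s := S) (t := S) (f := fun u v => ((g u v : ℤ) - g v u))
    have h3 : ∑ u ∈ S, ∑ v ∈ S, ((g u v : ℤ) - g v u)
        = - ∑ u ∈ S, ∑ v ∈ S, ((g u v : ℤ) - g v u) := by
      nth_rewrite 2 [this]
      rw [← Finset.sum_neg_distrib]
      exact Finset.sum_congr rfl fun u _ => by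
        rw [← Finset.sum_neg_distrib]
        exact Finset.sum_congr rfl fun v _ => by ring
    linarith
  rw [h2, zero_add]

lemma divg_eq_zero_of_conservation {c : V → V → ℕ} {s t : V} {f : V → V → ℕ}
    (hf : IsFlow c s t f) {v : V} (hvs : v ≠ s) (hvt : v ≠ t) : divg f v = 0 := by
  have h := hf.2 v hvs hvt
  have h2 : ((∑ y ∈ Finset.univ.erase v, f v y : ℕ) : ℤ)
      = ((∑ y ∈ Finset.univ.erase v, f y v : ℕ) : ℤ) := by rw [h]
  rw [divg]
  push_cast at h2 ⊢
  omega

lemma flowValue_eq_sum_divg {c : V → V → ℕ} {s t : V} {f : V → V → ℕ}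
    (hf : IsFlow c s t f) {S : Finset V} (hs : s ∈ S) (ht : t ∉ S) :
    flowValue f s = ∑ u ∈ S, divg f u := by
  rw [flowValue_eq_divg]
  rw [← Finset.add_sum_erase S (divg f) hs]
  have : ∑ u ∈ S.erase s, divg f u = 0 := by
    refine Finset.sum_eq_zero fun u hu => ?_
    have hus : u ≠ s := Finset.ne_of_mem_erase hu
    have hut : u ≠ t := fun h => ht (h ▸ Finset.mem_of_mem_erase hu)
    exact divg_eq_zero_of_conservation hf hus hut
  rw [this, add_zero]

/-- Weak duality: the value of any flow is at most the capacity of any cut. -/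
lemma flowValue_le_cutCap {c : V → V → ℕ} {s t : V} {f : V → V → ℕ}
    (hf : IsFlow c s t f) {S : Finset V} (hs : s ∈ S) (ht : t ∉ S) :
    flowValue f s ≤ (cutCap c S : ℤ) := by
  rw [flowValue_eq_sum_divg hf hs ht, sum_divg]
  unfold cutCap
  push_cast
  refine Finset.sum_le_sum fun u hu => Finset.sum_le_sum fun v hv => ?_
  have huv : u ≠ v := by
    rintro rfl
    exact (Finset.mem_compl.mp hv) hu
  have h0 : (0 : ℤ) ≤ f v u := by positivity
  have h2 : (f u v : ℤ) ≤ c u v := by exact_mod_cast hf.1 u v huv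
  omega

lemma zero_mem_flowSet (c : V → V → ℕ) (s t : V) :
    0 ∈ {n : ℕ | ∃ f : V → V → ℕ, IsFlow c s t f ∧ flowValue f s = (n : ℤ)} := by
  refine ⟨fun _ _ => 0, ⟨fun _ _ _ => Nat.zero_le _, fun _ _ _ => rfl⟩, ?_⟩
  simp [flowValue]

lemma maxFlow_le_cutCap {c : V → V → ℕ} {s t : V} {S : Finset V}
    (hs : s ∈ S) (ht : t ∉ S) : maxFlow c s t ≤ cutCap c S := by
  refine csSup_le ⟨0, zero_mem_flowSet c s t⟩ ?_
  rintro n ⟨f, hf, hval⟩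
  have := flowValue_le_cutCap hf hs ht
  rw [hval] at this
  exact_mod_cast this

lemma flowSet_bddAbove (c : V → V → ℕ) {s t : V} (hst : s ≠ t) :
    BddAbove {n : ℕ | ∃ f : V → V → ℕ, IsFlow c s t f ∧ flowValue f s = (n : ℤ)} := by
  refine ⟨cutCap c {t}ᶜ, ?_⟩
  rintro n ⟨f, hf, hval⟩
  have hs : s ∈ ({t}ᶜ : Finset V) := by simp [hst]
  have ht : t ∉ ({t}ᶜ : Finset V) := by simp
  have := flowValue_le_cutCap hf hs ht
  rw [hval] at this
  exact_mod_cast this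

lemma exists_maxFlow (c : V → V → ℕ) {s t : V} (hst : s ≠ t) :
    ∃ f : V → V → ℕ, IsFlow c s t f ∧ flowValue f s = (maxFlow c s t : ℤ) := by
  have := Nat.sSup_mem ⟨0, zero_mem_flowSet c s t⟩ (flowSet_bddAbove c hst)
  obtain ⟨f, hf, hval⟩ := this
  exact ⟨f, hf, hval⟩

lemma le_maxFlow {c : V → V → ℕ} {s t : V} (hst : s ≠ t) {n : ℕ} {f : V → V → ℕ}
    (hf : IsFlow c s t f) (hval : flowValue f s = (n : ℤ)) : n ≤ maxFlow c s t :=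
  le_csSup (flowSet_bddAbove c hst) ⟨f, hf, hval⟩

/-- How `divg` changes when a single arc `(p, q)` is modified by `δ`. -/
lemma divg_modify {g g' : V → V → ℕ} {p q : V} (hpq : p ≠ q) (δ : ℤ)
    (harc : (g' p q : ℤ) = g p q + δ)
    (hoth : ∀ a b, ¬(a = p ∧ b = q) → g' a b = g a b) :
    divg g' p = divg g p + δ ∧ divg g' q = divg g q - δ ∧
      ∀ w, w ≠ p → w ≠ q → divg g' w = divg g w := by
  refine ⟨?_, ?_, ?_⟩
  · rw [divg_eq_sum, divg_eq_sum]
    have : ∀ v ∈ Finset.univ, ((g' p v : ℤ) - g' v p)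
        = (((g p v : ℤ) - g v p) + if v = q then δ else 0) := by
      intro v _
      have h1 : g' v p = g v p := hoth v p (fun h => hpq (h.2.symm ▸ rfl))
      by_cases hv : v = q
      · subst hv; rw [if_pos rfl, h1, harc]; ring
      · rw [if_neg hv, h1, hoth p v (fun h => hv h.2)]; ring
    rw [Finset.sum_congr rfl this, Finset.sum_add_distrib, Finset.sum_ite_eq' Finset.univ q]
    simp
  · rw [divg_eq_sum, divg_eq_sum]
    have : ∀ v ∈ Finset.univ, ((g' q v : ℤ) - g' v q)
        = (((g q v : ℤ) - g v q) - if v = p then δ else 0) := by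
      intro v _
      have h1 : g' q v = g q v := hoth q v (fun h => hpq h.1.symm)
      by_cases hv : v = p
      · subst hv; rw [if_pos rfl, h1, harc]; ring
      · rw [if_neg hv, h1, hoth v q (fun h => hv h.1)]; ring
    rw [Finset.sum_congr rfl this, Finset.sum_sub_distrib, Finset.sum_ite_eq' Finset.univ p]
    simp
  · intro w hwp hwq
    rw [divg_eq_sum, divg_eq_sum]
    refine Finset.sum_congr rfl fun v _ => ?_
    rw [hoth w v (fun h => hwp h.1), hoth v w (fun h => hwq h.2)]

/-- Augmenting one unit along the residual arc `(p, q)`. -/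
lemma residual_step (c : V → V → ℕ) (g : V → V → ℕ) (p q : V) (hpq : p ≠ q)
    (hres : g p q < c p q ∨ 0 < g q p) (hcap : ∀ a b, a ≠ b → g a b ≤ c a b) :
    ∃ g' : V → V → ℕ,
      (∀ a b, a ≠ b → g' a b ≤ c a b) ∧
      (∀ a b, ¬(a = p ∧ b = q) → ¬(a = q ∧ b = p) → g' a b = g a b) ∧
      divg g' p = divg g p + 1 ∧ divg g' q = divg g q - 1 ∧
      (∀ w, w ≠ p → w ≠ q → divg g' w = divg g w) := by
  rcases hres with hres | hres
  · refine ⟨fun a b => if a = p ∧ b = q then g a b + 1 else g a b, ?_, ?_, ?_⟩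
    · intro a b hab
      by_cases h : a = p ∧ b = q
      · simp only [if_pos h]; obtain ⟨rfl, rfl⟩ := h; omega
      · simp only [if_neg h]; exact hcap a b hab
    · intro a b h1 _; simp only [if_neg h1]
    · have := divg_modify (g := g) (g' := fun a b => if a = p ∧ b = q then g a b + 1 else g a b)
        hpq 1 (by simp) (fun a b h => by simp only [if_neg h])
      exact ⟨this.1, this.2.1, this.2.2⟩
  · refine ⟨fun a b => if a = q ∧ b = p then g a b - 1 else g a b, ?_, ?_, ?_⟩
    · intro a b hab
      by_cases h : a = q ∧ b = p
      · simp only [if_pos h]; exact le_trans (Nat.sub_le _ _) (hcap a b hab)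
      · simp only [if_neg h]; exact hcap a b hab
    · intro a b _ h2; simp only [if_neg h2]
    · have := divg_modify (g := g) (g' := fun a b => if a = q ∧ b = p then g a b - 1 else g a b)
        hpq.symm (-1)
        (show ((if q = q ∧ p = p then g q p - 1 else g q p : ℕ) : ℤ) = (g q p : ℤ) + (-1) by
          rw [if_pos ⟨rfl, rfl⟩, Nat.cast_sub hres]; ring)
        (fun a b h => by simp only [if_neg h])
      refine ⟨?_, ?_, fun w hwp hwq => this.2.2 w hwq hwp⟩
      · rw [this.2.1]; ring
      · rw [this.1]; ring

/-- Augmenting one unit along a nodup residual path. -/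
lemma chain_aug (c f : V → V → ℕ) (hcap : ∀ a b, a ≠ b → f a b ≤ c a b) :
    ∀ (l : List V) (u v : V),
      List.Chain' (fun a b => a ≠ b ∧ (f a b < c a b ∨ 0 < f b a)) (u :: v :: l) →
      (u :: v :: l).Nodup →
      ∃ g : V → V → ℕ,
        (∀ a b, a ≠ b → g a b ≤ c a b) ∧
        (∀ a b, a ∉ (u :: v :: l) ∨ b ∉ (u :: v :: l) → g a b = f a b) ∧
        divg g u = divg f u + 1 ∧
        divg g ((v :: l).getLast (List.cons_ne_nil _ _))
          = divg f ((v :: l).getLast (List.cons_ne_nil _ _)) - 1 ∧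
        ∀ w, w ≠ u → w ≠ (v :: l).getLast (List.cons_ne_nil _ _) → divg g w = divg f w := by
  intro l
  induction l with
  | nil =>
    intro u v hchain _
    have hr : u ≠ v ∧ (f u v < c u v ∨ 0 < f v u) := (List.isChain_cons_cons.mp hchain).1
    obtain ⟨g, hg1, hg2, hg3, hg4, hg5⟩ := residual_step c f u v hr.1 hr.2 hcap
    refine ⟨g, hg1, ?_, hg3, hg4, ?_⟩
    · intro a b hab
      refine hg2 a b ?_ ?_
      · rintro ⟨rfl, rfl⟩; simp at hab
      · rintro ⟨rfl, rfl⟩; simp at hab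
    · intro w hwu hwv
      exact hg5 w hwu hwv
  | cons w l' ih =>
    intro u v hchain hnodup
    have hchain' : List.Chain' (fun a b => a ≠ b ∧ (f a b < c a b ∨ 0 < f b a))
        (v :: w :: l') := (List.isChain_cons_cons.mp hchain).2
    have hr : u ≠ v ∧ (f u v < c u v ∨ 0 < f v u) := (List.isChain_cons_cons.mp hchain).1
    have hnodup' : (v :: w :: l').Nodup := hnodup.of_cons
    have hu_not : u ∉ (v :: w :: l') := (List.nodup_cons.mp hnodup).1
    obtain ⟨g, hg1, hg2, hg3, hg4, hg5⟩ := ih v w hchain' hnodup'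
    have huv : g u v = f u v := hg2 u v (Or.inl hu_not)
    have hvu : g v u = f v u := hg2 v u (Or.inr hu_not)
    obtain ⟨g', hg'1, hg'2, hg'3, hg'4, hg'5⟩ :=
      residual_step c g u v hr.1 (by rw [huv, hvu]; exact hr.2) hg1
    have hlast_mem : (w :: l').getLast (List.cons_ne_nil _ _) ∈ (w :: l') :=
      List.getLast_mem _
    have hlast_ne_u : (w :: l').getLast (List.cons_ne_nil _ _) ≠ u := by
      intro h; exact hu_not (by rw [← h]; exact List.mem_cons_of_mem _ hlast_mem)
    have hlast_ne_v : (w :: l').getLast (List.cons_ne_nil _ _) ≠ v := by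
      intro h
      exact (List.nodup_cons.mp hnodup').1 (h ▸ hlast_mem)
    have hlast_eq : (v :: w :: l').getLast (List.cons_ne_nil _ _)
        = (w :: l').getLast (List.cons_ne_nil _ _) := List.getLast_cons_cons
    refine ⟨g', hg'1, ?_, ?_, ?_, ?_⟩
    · intro a b hab
      have h2 : g a b = f a b := by
        refine hg2 a b ?_
        rcases hab with h | h
        · exact Or.inl fun hm => h (List.mem_cons_of_mem _ hm)
        · exact Or.inr fun hm => h (List.mem_cons_of_mem _ hm)
      rw [← h2]
      refine hg'2 a b ?_ ?_
      · rintro ⟨rfl, rfl⟩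
        rcases hab with h | h
        · exact h (List.mem_cons_self)
        · exact h (List.mem_cons_of_mem _ (List.mem_cons_self))
      · rintro ⟨rfl, rfl⟩
        rcases hab with h | h
        · exact h (List.mem_cons_of_mem _ (List.mem_cons_self))
        · exact h (List.mem_cons_self)
    · rw [hg'3, hg5 u (fun h => hr.1 h) hlast_ne_u.symm]
    · rw [hlast_eq, hg'5 _ hlast_ne_u hlast_ne_v, hg4]
    · intro w' hw'u hw'last
      rw [hlast_eq] at hw'last
      by_cases hw'v : w' = v
      · subst hw'v
        rw [hg'4, hg3]; ring
      · rw [hg'5 w' hw'u hw'v, hg5 w' hw'v hw'last]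

open List in
lemma pair_sublist_decomp {a : V} :
    ∀ m : List V, [a, a] <+ m → ∃ l1 l2 l3, m = l1 ++ a :: l2 ++ a :: l3 := by
  intro m h
  induction m with
  | nil => simp at h
  | cons b m' ih =>
    rcases h with _ | @⟨_, _, _, h'⟩ | @⟨_, _, _, h'⟩
    case cons =>
      obtain ⟨l1, l2, l3, rfl⟩ := ih ‹_›
      exact ⟨b :: l1, l2, l3, rfl⟩
    case cons.cons_cons =>
      have ha : a ∈ m' := by
        have : [a] <+ m' := ‹[a] <+ m'›
        exact this.subset (List.mem_singleton_self a)
      obtain ⟨s, t, rfl⟩ := List.append_of_mem ha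
      exact ⟨[], s, t, rfl⟩

lemma chain'_splice {r : V → V → Prop} {l1 l2 l3 : List V} {a : V}
    (h : List.Chain' r (l1 ++ a :: l2 ++ a :: l3)) : List.Chain' r (l1 ++ a :: l3) := by
  have h0 : List.Chain' r (l1 ++ a :: (l2 ++ a :: l3)) := by simpa using h
  obtain ⟨h1, h2⟩ := List.isChain_split.mp h0
  have h3 : List.Chain' r ((a :: l2) ++ a :: l3) := by simpa [List.Chain'] using h2
  obtain ⟨_, h4⟩ := List.isChain_split.mp h3
  exact List.isChain_split.mpr ⟨h1, h4⟩

lemma exists_nodup_chain'_aux {r : V → V → Prop} :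
    ∀ (n : ℕ) (m : List V), m.length ≤ n → List.Chain' r m →
      ∃ m' : List V, List.Chain' r m' ∧ m'.Nodup ∧ m'.head? = m.head? ∧
        m'.getLast? = m.getLast? := by
  intro n
  induction n with
  | zero =>
    intro m hm _
    have : m = [] := List.eq_nil_of_length_eq_zero (Nat.le_zero.mp hm)
    exact ⟨m, by rw [this]; exact List.isChain_nil, by simp [this], rfl, rfl⟩
  | succ n ih =>
    intro m hm hchain
    by_cases hnd : m.Nodup
    · exact ⟨m, hchain, hnd, rfl, rfl⟩
    · obtain ⟨a, ha⟩ := List.exists_duplicate_iff_not_nodup.mpr hnd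
      obtain ⟨l1, l2, l3, rfl⟩ := pair_sublist_decomp _ (List.duplicate_iff_sublist.mp ha)
      have hlen : (l1 ++ a :: l3).length ≤ n := by
        simp only [List.length_append, List.length_cons] at hm ⊢
        omega
      obtain ⟨m', hm'1, hm'2, hm'3, hm'4⟩ := ih (l1 ++ a :: l3) hlen (chain'_splice hchain)
      refine ⟨m', hm'1, hm'2, ?_, ?_⟩
      · rw [hm'3]
        cases l1 <;> rfl
      · rw [hm'4]
        rw [List.getLast?_append_cons,
          show l1 ++ a :: l2 ++ a :: l3 = l1 ++ a :: (l2 ++ a :: l3) by simp,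
          List.getLast?_append_cons, show a :: (l2 ++ a :: l3) = (a :: l2) ++ a :: l3 by simp,
          List.getLast?_append_cons]

lemma exists_nodup_path {r : V → V → Prop} {x z : V} (hxz : x ≠ z)
    (h : Relation.ReflTransGen r x z) :
    ∃ (v : V) (l : List V), List.Chain' r (x :: v :: l) ∧ (x :: v :: l).Nodup ∧
      (v :: l).getLast (List.cons_ne_nil _ _) = z := by
  obtain ⟨l0, hc, hlast⟩ := List.exists_isChain_cons_of_relationReflTransGen h
  have hchain' : List.Chain' r (x :: l0) := hc
  obtain ⟨m', h1, h2, h3, h4⟩ :=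
    exists_nodup_chain'_aux (x :: l0).length (x :: l0) le_rfl hchain'
  have hhead : m'.head? = some x := by rw [h3]; rfl
  obtain ⟨m'', rfl⟩ : ∃ t, m' = x :: t := by
    cases m' with
    | nil => simp at hhead
    | cons b t =>
      simp only [List.head?_cons, Option.some.injEq] at hhead
      exact ⟨t, by rw [hhead]⟩
  have hz : (x :: m'').getLast? = some z := by
    rw [h4, List.getLast?_eq_getLast_of_ne_nil (List.cons_ne_nil _ _), hlast]
  cases m'' with
  | nil => simp at hz; exact absurd hz hxz
  | cons v l =>
    refine ⟨v, l, h1, h2, ?_⟩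
    rw [List.getLast?_eq_getLast_of_ne_nil (List.cons_ne_nil _ _)] at hz
    have := Option.some.inj hz
    rwa [List.getLast_cons_cons] at this

/-- Max-flow min-cut, the hard direction: some cut has capacity at most the max flow. -/
lemma exists_mincut (c : V → V → ℕ) {x z : V} (hxz : x ≠ z) :
    ∃ S : Finset V, x ∈ S ∧ z ∉ S ∧ cutCap c S ≤ maxFlow c x z := by
  classical
  obtain ⟨f, hf, hval⟩ := exists_maxFlow c hxz
  set r : V → V → Prop := fun u v => u ≠ v ∧ (f u v < c u v ∨ 0 < f v u) with hr
  set S : Finset V := Finset.univ.filter (fun u => Relation.ReflTransGen r x u) with hS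
  have hxS : x ∈ S := Finset.mem_filter.mpr ⟨Finset.mem_univ x, Relation.ReflTransGen.refl⟩
  have hzS : z ∉ S := by
    simp only [hS, Finset.mem_filter, Finset.mem_univ, true_and]
    intro hreach
    obtain ⟨v, l, hchain, hnodup, hlastz⟩ := exists_nodup_path hxz hreach
    obtain ⟨g, hg1, hg2, hg3, hg4, hg5⟩ := chain_aug c f hf.1 l x v hchain hnodup
    rw [hlastz] at hg4 hg5
    have hgflow : IsFlow c x z g := by
      refine ⟨hg1, fun w hw1 hw2 => ?_⟩
      have hd : divg g w = 0 := by
        rw [hg5 w hw1 hw2]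
        exact divg_eq_zero_of_conservation hf hw1 hw2
      rw [divg, sub_eq_zero] at hd
      exact_mod_cast hd
    have hgval : flowValue g x = ((maxFlow c x z + 1 : ℕ) : ℤ) := by
      rw [flowValue_eq_divg, hg3, ← flowValue_eq_divg, hval]
      push_cast
      ring
    have := le_maxFlow hxz hgflow hgval
    omega
  refine ⟨S, hxS, hzS, ?_⟩
  have key : (maxFlow c x z : ℤ) = (cutCap c S : ℤ) := by
    rw [← hval, flowValue_eq_sum_divg hf hxS hzS, sum_divg]
    unfold cutCap
    push_cast
    refine Finset.sum_congr rfl fun u hu => Finset.sum_congr rfl fun v hv => ?_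
    have hu' : Relation.ReflTransGen r x u := by
      simpa [hS] using hu
    have hv' : ¬ Relation.ReflTransGen r x v := by
      have := Finset.mem_compl.mp hv
      simpa [hS] using this
    have huv : u ≠ v := by rintro rfl; exact hv' hu'
    have hnr : ¬ r u v := fun h => hv' (hu'.tail h)
    simp only [hr] at hnr
    push_neg at hnr
    obtain ⟨h1, h2⟩ := hnr huv
    have hle : f u v ≤ c u v := hf.1 u v huv
    have : f u v = c u v := le_antisymm hle h1
    have hzero : f v u = 0 := Nat.le_zero.mp h2
    rw [this, hzero]
    push_cast
    ring
  omega

end Aux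

/-- Gomory–Hu inequality for maximum flow values:
`φ_{xz} ≥ min{φ_{xy}, φ_{yz}}` for pairwise distinct `x, y, z`. -/
theorem stmt0 {V : Type*} [Fintype V] [DecidableEq V]
    (hV : 2 ≤ Fintype.card V) (c : V → V → ℕ)
    (x y z : V) (hxy : x ≠ y) (hyz : y ≠ z) (hxz : x ≠ z) :
    min (maxFlow c x y) (maxFlow c y z) ≤ maxFlow c x z := by
  obtain ⟨S, hxS, hzS, hcut⟩ := exists_mincut c hxz
  by_cases hy : y ∈ S
  · calc min (maxFlow c x y) (maxFlow c y z) ≤ maxFlow c y z := min_le_right _ _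
      _ ≤ cutCap c S := maxFlow_le_cutCap hy hzS
      _ ≤ maxFlow c x z := hcut
  · calc min (maxFlow c x y) (maxFlow c y z) ≤ maxFlow c x y := min_le_left _ _
      _ ≤ cutCap c S := maxFlow_le_cutCap hxS hy
      _ ≤ maxFlow c x z := hcut
end

section
/- Let V be a finite set with |V| ≥ 2, A = V² ∖ {(x,x) : x ∈ V}, and let θ : A → ℝ satisfy the Gomory–Hu condition. Then the relation R(θ) = {(x,y) ∈ A : θ(x,y) ≥ θ(y,x)} ∪ {(x,x) : x ∈ V} is complete and quasi-transitive. -/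
/-- A linear order relation: complete, transitive and antisymmetric. -/
def IsLinearRel {V : Type*} (L : V → V → Prop) : Prop :=
  CompleteRel L ∧ Transitive L ∧ ∀ x y : V, L x y → L y x → x = y

/-- A relation `P` is acyclic if for every sequence of `m ≥ 2` distinct elements
whose consecutive pairs are related by `P`, the last element is not related to
the first one. -/
def AcyclicRel {V : Type*} (P : V → V → Prop) : Prop :=
  ∀ (x y : V) (l : List V), (x :: (l ++ [y])).Nodup →
    List.Chain' P (x :: (l ++ [y])) → ¬ P y x

/-- The set `𝐋_⋄(R)` of linear refinements of `R`. -/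
def linRefinements {V : Type*} (R : V → V → Prop) : Set (V → V → Prop) :=
  {L | IsLinearRel L ∧ ∀ x y : V, L x y → R x y}

/-- The set `𝐋^⋄(Q)` of linear extensions of `Q`. -/
def linExtensions {V : Type*} (Q : V → V → Prop) : Set (V → V → Prop) :=
  {L | IsLinearRel L ∧ ∀ x y : V, Q x y → L x y}

/-- `θ` satisfies the Gomory–Hu condition: for pairwise distinct `x, y, z`,
`θ(x,z) ≥ min{θ(x,y), θ(y,z)}`. -/
def GomoryHu {V : Type*} (θ : V → V → ℝ) : Prop :=
  ∀ x y z : V, x ≠ y → y ≠ z → x ≠ z → min (θ x y) (θ y z) ≤ θ x z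

/-- The relation `R(θ)` induced by `θ`: `x ⪰ y` iff `x = y`, or `x ≠ y` and
`θ(x,y) ≥ θ(y,x)`. -/
def RelOf {V : Type*} (θ : V → V → ℝ) (x y : V) : Prop :=
  x = y ∨ (x ≠ y ∧ θ y x ≤ θ x y)

/-- If `θ` satisfies the Gomory–Hu condition, then `R(θ)` is complete and
quasi-transitive. -/
theorem stmt1 {V : Type*} [Fintype V] (hV : 2 ≤ Fintype.card V)
    (θ : V → V → ℝ) (hθ : GomoryHu θ) :
    CompleteRel (RelOf θ) ∧ QuasiTransitive (RelOf θ) := by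
  constructor
  · intro x y
    by_cases h : x = y
    · exact Or.inl (Or.inl h)
    · rcases le_total (θ y x) (θ x y) with h1 | h1
      · exact Or.inl (Or.inr ⟨h, h1⟩)
      · exact Or.inr (Or.inr ⟨Ne.symm h, h1⟩)
  · intro x y z hxy hyz
    obtain ⟨hxyR, hnyx⟩ := hxy
    obtain ⟨hyzR, hnzy⟩ := hyz
    have hxyne : x ≠ y := by rintro rfl; exact hnyx hxyR
    have hyzne : y ≠ z := by rintro rfl; exact hnzy hyzR
    have h1 : θ y x < θ x y := by
      rcases hxyR with h | ⟨_, h⟩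
      · exact absurd h hxyne
      · rcases lt_or_ge (θ y x) (θ x y) with h2 | h2
        · exact h2
        · exact absurd (Or.inr ⟨Ne.symm hxyne, h2⟩) hnyx
    have h2 : θ z y < θ y z := by
      rcases hyzR with h | ⟨_, h⟩
      · exact absurd h hyzne
      · rcases lt_or_ge (θ z y) (θ y z) with h3 | h3
        · exact h3
        · exact absurd (Or.inr ⟨Ne.symm hyzne, h3⟩) hnzy
    have hxzne : x ≠ z := by
      rintro rfl
      exact absurd h2 (not_lt.mpr h1.le)
    have key : θ z x < θ x z := by
      by_contra hc
      push_neg at hc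
      have g1 := hθ x y z hxyne hyzne hxzne
      have g2 := hθ z x y (Ne.symm hxzne) hxyne (Ne.symm hyzne)
      have g3 := hθ y z x hyzne (Ne.symm hxzne) (Ne.symm hxyne)
      rw [min_le_iff] at g1 g2 g3
      rcases g1 with g1 | g1 <;> rcases g2 with g2 | g2 <;>
        rcases g3 with g3 | g3 <;> linarith
    constructor
    · exact Or.inr ⟨hxzne, key.le⟩
    · rintro (h | ⟨_, h⟩)
      · exact hxzne h.symm
      · exact absurd h (not_le.mpr key)
end

section
/- Let R be a complete and quasi-transitive relation on a finite set V with |V| ≥ 2, and let N_R be the network on V with capacity c_R(x,y) = 1 if (x,y) is in the strict part S(R) and c_R(x,y) = 0 otherwise. Then for every arc (x,y): (i) the maximum flow value φ^{N_R}_{xy} is positive if and only if (x,y) ∈ S(R); (ii) φ^{N_R}_{xy} = φ^{N_R}_{yx} = 0 if and only if both (x,y) ∈ R and (y,x) ∈ R. -/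
open Finset in
/-- Cut lemma: if all arcs out of a set `A` containing `s` but not `t` carry
zero flow, then the flow value is nonpositive. -/
lemma cut_lemma_aux {V : Type*} [Fintype V] [DecidableEq V]
    (c : V → V → ℕ) (s t : V) (f : V → V → ℕ)
    (hf : IsFlow c s t f) (A : Finset V) (hs : s ∈ A) (ht : t ∉ A)
    (hcut : ∀ a ∈ A, ∀ b ∉ A, f a b = 0) :
    flowValue f s ≤ 0 := by
  set g : V → ℤ := fun a => ∑ y ∈ univ.erase a, ((f a y : ℤ) - (f y a : ℤ)) with hg
  have hval : flowValue f s = g s := by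
    simp [flowValue, hg, Finset.sum_sub_distrib]
  have hzero : ∀ a : V, a ≠ s → a ≠ t → g a = 0 := by
    intro a has hat
    have h := hf.2 a has hat
    have h1 : (∑ y ∈ univ.erase a, (f a y : ℤ)) = ∑ y ∈ univ.erase a, (f y a : ℤ) := by
      exact_mod_cast h
    show (∑ y ∈ univ.erase a, ((f a y : ℤ) - (f y a : ℤ))) = 0
    rw [Finset.sum_sub_distrib, h1, sub_self]
  have hsum : ∑ a ∈ A, g a = g s :=
    Finset.sum_eq_single_of_mem s hs (fun a ha hne => hzero a hne (fun h => ht (h ▸ ha)))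
  have hfull : ∀ a ∈ A, g a = ∑ y ∈ univ, ((f a y : ℤ) - (f y a : ℤ)) := by
    intro a _
    exact Finset.sum_erase (f := fun y => (f a y : ℤ) - (f y a : ℤ)) (a := a) Finset.univ (sub_self _)
  have hle : ∑ a ∈ A, g a ≤ 0 := by
    rw [Finset.sum_congr rfl hfull]
    have split : ∀ a ∈ A, ∑ y ∈ univ, ((f a y : ℤ) - (f y a : ℤ))
        = (∑ y ∈ A, ((f a y : ℤ) - (f y a : ℤ)))
          + ∑ y ∈ Aᶜ, ((f a y : ℤ) - (f y a : ℤ)) :=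
      fun a _ => (Finset.sum_add_sum_compl A _).symm
    rw [Finset.sum_congr rfl split, Finset.sum_add_distrib]
    have h1 : (∑ a ∈ A, ∑ y ∈ A, ((f a y : ℤ) - (f y a : ℤ))) = 0 := by
      have e : ∑ a ∈ A, ∑ y ∈ A, ((f a y : ℤ) - (f y a : ℤ))
          = (∑ a ∈ A, ∑ y ∈ A, (f a y : ℤ)) - ∑ a ∈ A, ∑ y ∈ A, (f y a : ℤ) := by
        simp [Finset.sum_sub_distrib]
      rw [e, Finset.sum_comm, sub_self]
    have h2 : (∑ a ∈ A, ∑ y ∈ Aᶜ, ((f a y : ℤ) - (f y a : ℤ))) ≤ 0 := by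
      apply Finset.sum_nonpos
      intro a ha
      apply Finset.sum_nonpos
      intro y hy
      have h0 : f a y = 0 := hcut a ha y (by simpa using hy)
      simp [h0]
    omega
  rw [hval, ← hsum]; exact hle

/-- The zero flow is a flow with value zero. -/
lemma zero_flow_mem {V : Type*} [Fintype V] [DecidableEq V]
    (c : V → V → ℕ) (s t : V) :
    (0 : ℕ) ∈ {n : ℕ | ∃ f : V → V → ℕ, IsFlow c s t f ∧ flowValue f s = (n : ℤ)} :=
  ⟨fun _ _ => 0, ⟨fun _ _ _ => Nat.zero_le _, fun _ _ _ => rfl⟩, by simp [flowValue]⟩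

/-- The set of achieved flow values is bounded above by the outdegree. -/
lemma flow_bdd {V : Type*} [Fintype V] [DecidableEq V]
    (c : V → V → ℕ) (s t : V) :
    BddAbove {n : ℕ | ∃ f : V → V → ℕ, IsFlow c s t f ∧ flowValue f s = (n : ℤ)} := by
  refine ⟨outdeg c s, ?_⟩
  rintro n ⟨f, hf, hv⟩
  have h1 : flowValue f s ≤ (outdeg c s : ℤ) := by
    unfold flowValue outdeg
    have hle : ∑ y ∈ Finset.univ.erase s, (f s y : ℤ)
        ≤ ∑ y ∈ Finset.univ.erase s, (c s y : ℤ) :=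
      Finset.sum_le_sum fun y hy => by
        exact_mod_cast hf.1 s y (Ne.symm (Finset.ne_of_mem_erase hy))
    have h2 : (0 : ℤ) ≤ ∑ y ∈ Finset.univ.erase s, (f y s : ℤ) :=
      Finset.sum_nonneg fun y _ => by positivity
    push_cast
    linarith
  have : (n : ℤ) ≤ (outdeg c s : ℤ) := hv ▸ h1
  exact_mod_cast this

/-- If every flow has nonpositive value, the max flow is zero. -/
lemma maxFlow_eq_zero_of {V : Type*} [Fintype V] [DecidableEq V]
    (c : V → V → ℕ) (s t : V)
    (h : ∀ f : V → V → ℕ, IsFlow c s t f → flowValue f s ≤ 0) :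
    maxFlow c s t = 0 := by
  unfold maxFlow
  have hset : {n : ℕ | ∃ f : V → V → ℕ, IsFlow c s t f ∧ flowValue f s = (n : ℤ)}
      = {0} := by
    apply Set.eq_singleton_iff_unique_mem.mpr
    refine ⟨zero_flow_mem c s t, ?_⟩
    rintro n ⟨f, hf, hv⟩
    have h2 : (n : ℤ) ≤ 0 := hv ▸ h f hf
    exact_mod_cast le_antisymm h2 (by positivity)
  rw [hset, csSup_singleton]

/-- If there is a direct arc of capacity at least 1, the max flow is at least 1. -/
lemma one_le_maxFlow {V : Type*} [Fintype V] [DecidableEq V]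
    (c : V → V → ℕ) (s t : V) (hst : s ≠ t) (hc : 1 ≤ c s t) :
    1 ≤ maxFlow c s t := by
  have h1 : (1 : ℕ) ∈ {n : ℕ | ∃ f : V → V → ℕ, IsFlow c s t f ∧ flowValue f s = (n : ℤ)} := by
    refine ⟨fun u v => if u = s ∧ v = t then 1 else 0, ⟨?_, ?_⟩, ?_⟩
    · intro u v _
      by_cases h : u = s ∧ v = t
      · obtain ⟨rfl, rfl⟩ := h; simpa using hc
      · simp [h]
    · intro z hzs hzt
      rw [Finset.sum_eq_zero fun y _ => by simp [hzs],
        Finset.sum_eq_zero fun y _ => by simp [hzt]]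
    · show (∑ y ∈ Finset.univ.erase s,
          ((if s = s ∧ y = t then (1 : ℕ) else 0 : ℕ) : ℤ)) -
          (∑ y ∈ Finset.univ.erase s,
          ((if y = s ∧ s = t then (1 : ℕ) else 0 : ℕ) : ℤ)) = 1
      have e1 : ∑ y ∈ Finset.univ.erase s,
          ((if s = s ∧ y = t then (1 : ℕ) else 0 : ℕ) : ℤ) = 1 := by
        rw [Finset.sum_eq_single_of_mem t (by simp [Ne.symm hst])]
        · simp
        · intro y _ hy; simp [hy]
      have e2 : ∑ y ∈ Finset.univ.erase s,
          ((if y = s ∧ s = t then (1 : ℕ) else 0 : ℕ) : ℤ) = 0 := by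
        apply Finset.sum_eq_zero; intro y _; simp [hst]
      rw [e1, e2, sub_zero]
  exact le_csSup (flow_bdd c s t) h1

/-- For a complete and quasi-transitive relation `R` and the network `N_R`
with capacity `1` on the arcs of `S(R)` and `0` elsewhere:
(i) `φ^{N_R}_{xy} > 0` iff `(x,y) ∈ S(R)`;
(ii) `φ^{N_R}_{xy} = φ^{N_R}_{yx} = 0` iff `x ∼_R y`. -/
theorem stmt4 {V : Type*} [Fintype V] [DecidableEq V]
    (hV : 2 ≤ Fintype.card V) (R : V → V → Prop) [DecidableRel R]
    (hc : CompleteRel R) (hq : QuasiTransitive R) :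
    (∀ x y : V, x ≠ y →
      (0 < maxFlow (fun u v => if R u v ∧ ¬ R v u then 1 else 0) x y ↔
        StrictPart R x y)) ∧
    (∀ x y : V, x ≠ y →
      ((maxFlow (fun u v => if R u v ∧ ¬ R v u then 1 else 0) x y = 0 ∧
        maxFlow (fun u v => if R u v ∧ ¬ R v u then 1 else 0) y x = 0) ↔
        (R x y ∧ R y x))) := by
  set c : V → V → ℕ := fun u v => if R u v ∧ ¬ R v u then 1 else 0 with hcdef
  have key : ∀ x y : V, x ≠ y → (0 < maxFlow c x y ↔ StrictPart R x y) := by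
    intro x y hxy
    constructor
    · intro hpos
      by_contra hS
      have hzero : maxFlow c x y = 0 := by
        apply maxFlow_eq_zero_of
        intro f hf
        refine cut_lemma_aux c x y f hf
          (Finset.univ.filter (fun z => z = x ∨ (R x z ∧ ¬ R z x))) ?_ ?_ ?_
        · simp
        · simp only [Finset.mem_filter, Finset.mem_univ, true_and]
          push_neg
          exact ⟨Ne.symm hxy, fun h1 => not_not.mp (fun h2 => hS ⟨h1, h2⟩)⟩
        · intro a ha b hb
          simp only [Finset.mem_filter, Finset.mem_univ, true_and] at ha hb
          push_neg at hb
          have hab : a ≠ b := by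
            rintro rfl
            rcases ha with rfl | h
            · exact hb.1 rfl
            · exact h.2 (hb.2 h.1)
          have hcab : c a b = 0 := by
            have hnS : ¬ (R a b ∧ ¬ R b a) := by
              intro hSab
              rcases ha with rfl | hSa
              · exact hSab.2 (hb.2 hSab.1)
              · have hxb : StrictPart R x b := hq hSa hSab
                exact hxb.2 (hb.2 hxb.1)
            simp [hcdef, hnS]
          have := hf.1 a b hab
          omega
      omega
    · intro hS
      have hc1 : 1 ≤ c x y := by simp [hcdef, hS.1, hS.2]
      have := one_le_maxFlow c x y hxy hc1
      omega
  constructor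
  · exact key
  · intro x y hxy
    constructor
    · rintro ⟨h1, h2⟩
      have n1 : ¬ StrictPart R x y := fun h => by
        have := (key x y hxy).mpr h; omega
      have n2 : ¬ StrictPart R y x := fun h => by
        have := (key y x (Ne.symm hxy)).mpr h; omega
      unfold StrictPart at n1 n2
      rcases hc x y with h | h
      · exact ⟨h, by tauto⟩
      · exact ⟨by tauto, h⟩
    · rintro ⟨hxy', hyx'⟩
      constructor
      · have := mt (key x y hxy).mp (fun hS => hS.2 hyx')
        omega
      · have := mt (key y x (Ne.symm hxy)).mp (fun hS => hS.2 hxy')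
        omega
end

section
/- Let V be a finite set with |V| ≥ 2, A = V² ∖ {(x,x) : x ∈ V}, and let R be a relation on V. Then R is complete and quasi-transitive if and only if there exists θ : A → ℝ satisfying the Gomory–Hu condition such that R = R(θ) = {(x,y) ∈ A : θ(x,y) ≥ θ(y,x)} ∪ {(x,x) : x ∈ V}. -/
/-- Characterization: `R` is complete and quasi-transitive iff `R = R(θ)` for
some `θ` satisfying the Gomory–Hu condition. -/
theorem stmt6 {V : Type*} [Fintype V] (hV : 2 ≤ Fintype.card V)
    (R : V → V → Prop) :
    (CompleteRel R ∧ QuasiTransitive R) ↔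
      (∃ θ : V → V → ℝ, GomoryHu θ ∧ ∀ x y : V, R x y ↔ RelOf θ x y) := by

  classical
  constructor
  · rintro ⟨hc, hq⟩
    refine ⟨fun x y => if StrictPart R x y then (1:ℝ) else 0, ?_, ?_⟩
    · intro x y z hxy hyz hxz
      by_cases h1 : StrictPart R x y
      · by_cases h2 : StrictPart R y z
        · simp [h1, h2, hq h1 h2]
        · simp only [h1, h2, if_true, if_false]
          split_ifs <;> norm_num
      · simp only [h1, if_false]
        split_ifs <;> norm_num
    · intro x y
      by_cases hxy : x = y
      · subst hxy
        constructor
        · intro _; exact Or.inl rfl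
        · intro _; rcases hc x x with h | h <;> exact h
      · constructor
        · intro h
          refine Or.inr ⟨hxy, ?_⟩
          have : ¬ StrictPart R y x := fun hs => hs.2 h
          simp only [this, if_false]
          split_ifs <;> norm_num
        · rintro (h | ⟨_, h⟩)
          · exact absurd h hxy
          · by_contra hR
            have hyx : R y x := (hc x y).resolve_left hR
            have hs : StrictPart R y x := ⟨hyx, hR⟩
            have hns : ¬ StrictPart R x y := fun hs' => hs'.2 hyx
            simp only [hs, hns, if_true, if_false] at h
            norm_num at h
  · rintro ⟨θ, hGH, hiff⟩
    constructor
    · intro x y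
      by_cases hxy : x = y
      · exact Or.inl ((hiff x y).mpr (Or.inl hxy))
      · rcases le_total (θ y x) (θ x y) with h | h
        · exact Or.inl ((hiff x y).mpr (Or.inr ⟨hxy, h⟩))
        · exact Or.inr ((hiff y x).mpr (Or.inr ⟨Ne.symm hxy, h⟩))
    · rintro x y z ⟨hxy, hnyx⟩ ⟨hyz, hnzy⟩
      have hxy' := (hiff x y).mp hxy
      have hyz' := (hiff y z).mp hyz
      -- extract strict inequalities
      have hne_xy : x ≠ y := by
        rintro rfl; exact hnyx hxy
      have hne_yz : y ≠ z := by
        rintro rfl; exact hnzy hyz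
      have h1 : θ y x < θ x y := by
        by_contra h
        push_neg at h
        exact hnyx ((hiff y x).mpr (Or.inr ⟨Ne.symm hne_xy, h⟩))
      have h2 : θ z y < θ y z := by
        by_contra h
        push_neg at h
        exact hnzy ((hiff z y).mpr (Or.inr ⟨Ne.symm hne_yz, h⟩))
      have hne_xz : x ≠ z := by
        rintro rfl; linarith
      have h3 : θ z x < θ x z := by
        by_contra h
        push_neg at h
        have A := hGH x y z hne_xy hne_yz hne_xz
        have B := hGH y z x hne_yz (Ne.symm hne_xz) (Ne.symm hne_xy)
        have C := hGH z x y (Ne.symm hne_xz) hne_xy (Ne.symm hne_yz)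
        rw [min_le_iff] at A B C
        rcases A with A | A <;> rcases B with B | B <;> rcases C with C | C <;> linarith
      refine ⟨(hiff x z).mpr (Or.inr ⟨hne_xz, le_of_lt h3⟩), ?_⟩
      intro hzx
      rcases (hiff z x).mp hzx with h | ⟨_, h⟩
      · exact hne_xz h.symm
      · linarith
end

section
/- Let N = (V,A,c) be a network on a finite set V with |V| ≥ 2. Assume N belongs to at least one of the following classes: (1) N is balanced, i.e., there is k ∈ ℕ₀ with c(x,y) + c(y,x) = k for all arcs; (2) there is ω₁ : V → ℕ₀ with c(x,y) = ω₁(x) for all arcs (x,y); (3) there is ω₂ : V → ℕ₀ with c(x,y) = ω₂(y) for all arcs (x,y). Then the flow relation, the Borda relation and the dual Borda relation of N coincide: 𝔉(N) = 𝔅(N) = 𝔅̂(N). -/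
open Finset

namespace NetFlow

variable {V : Type*} [Fintype V] [DecidableEq V]

/-- capacity of a cut -/
def cap (c : V → V → ℕ) (S : Finset V) : ℕ := ∑ u ∈ S, ∑ w ∈ Sᶜ, c u w

lemma flowValue_def (f : V → V → ℕ) (x : V) :
    flowValue f x = ∑ y ∈ univ.erase x, ((f x y : ℤ) - f y x) := by
  simp [flowValue, Finset.sum_sub_distrib]

lemma conserve_iff (f : V → V → ℕ) (x : V) :
    flowValue f x = 0 ↔
      (∑ y ∈ univ.erase x, f x y = ∑ y ∈ univ.erase x, f y x) := by
  rw [flowValue, sub_eq_zero]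
  constructor
  · intro h; exact_mod_cast h
  · intro h; exact_mod_cast h

variable {c : V → V → ℕ} {s t : V} {f : V → V → ℕ}

lemma cut_identity (hf : IsFlow c s t f) {S : Finset V} (hs : s ∈ S) (ht : t ∉ S) :
    flowValue f s = ∑ u ∈ S, ∑ w ∈ Sᶜ, ((f u w : ℤ) - f w u) := by
  have h1 : ∑ u ∈ S, flowValue f u = flowValue f s := by
    apply Finset.sum_eq_single_of_mem s hs
    intro u hu hus
    rw [conserve_iff]
    exact hf.2 u hus (fun h => ht (h ▸ hu))
  have h2 : ∀ u ∈ S, univ.erase u = (S.erase u) ∪ Sᶜ := by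
    intro u hu; ext w
    simp only [mem_erase, mem_union, mem_compl, mem_univ, and_true]
    constructor
    · intro hw
      by_cases h : w ∈ S
      · exact Or.inl ⟨hw, h⟩
      · exact Or.inr h
    · rintro (⟨h, _⟩ | h)
      · exact h
      · rintro rfl; exact h hu
  have hdisj : Disjoint (S.erase s) Sᶜ := disjoint_compl_right.mono_left (erase_subset _ _)
  have hdisj' : ∀ u : V, Disjoint (S.erase u) Sᶜ := fun u =>
    disjoint_compl_right.mono_left (erase_subset _ _)
  have key : ∀ g : V → V → ℤ, ∑ u ∈ S, ∑ w ∈ S.erase u, g u w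
      = ∑ u ∈ S, ∑ w ∈ S, g u w - ∑ u ∈ S, g u u := by
    intro g
    rw [← Finset.sum_sub_distrib]
    exact Finset.sum_congr rfl fun u hu => Finset.sum_erase_eq_sub hu
  have hz : ∑ u ∈ S, ∑ w ∈ S.erase u, ((f u w : ℤ) - f w u) = 0 := by
    rw [key]
    simp only [sub_self, Finset.sum_const_zero, sub_zero, Finset.sum_sub_distrib]
    rw [Finset.sum_comm]
    exact sub_self _
  calc flowValue f s = ∑ u ∈ S, flowValue f u := h1.symm
    _ = ∑ u ∈ S, (∑ w ∈ S.erase u, ((f u w : ℤ) - f w u)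
          + ∑ w ∈ Sᶜ, ((f u w : ℤ) - f w u)) := by
        refine Finset.sum_congr rfl fun u hu => ?_
        rw [flowValue_def, h2 u hu, Finset.sum_union (hdisj' u)]
    _ = ∑ u ∈ S, ∑ w ∈ S.erase u, ((f u w : ℤ) - f w u)
          + ∑ u ∈ S, ∑ w ∈ Sᶜ, ((f u w : ℤ) - f w u) := Finset.sum_add_distrib
    _ = ∑ u ∈ S, ∑ w ∈ Sᶜ, ((f u w : ℤ) - f w u) := by rw [hz, zero_add]

lemma flowValue_le_cap (hf : IsFlow c s t f) {S : Finset V} (hs : s ∈ S) (ht : t ∉ S) :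
    flowValue f s ≤ (cap c S : ℤ) := by
  rw [cut_identity hf hs ht, cap]
  push_cast
  refine Finset.sum_le_sum fun u hu => Finset.sum_le_sum fun w hw => ?_
  have hne : u ≠ w := by rintro rfl; exact (Finset.mem_compl.mp hw) hu
  have h1 : (f u w : ℤ) ≤ c u w := by exact_mod_cast hf.1 u w hne
  have h2 : (0 : ℤ) ≤ f w u := Int.natCast_nonneg _
  linarith

def FSet (c : V → V → ℕ) (s t : V) : Set ℕ :=
  {n : ℕ | ∃ f : V → V → ℕ, IsFlow c s t f ∧ flowValue f s = (n : ℤ)}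

lemma maxFlow_eq (c : V → V → ℕ) (s t : V) : maxFlow c s t = sSup (FSet c s t) := rfl

lemma zero_mem_FSet : 0 ∈ FSet c s t :=
  ⟨fun _ _ => 0, ⟨fun _ _ _ => Nat.zero_le _, fun _ _ _ => rfl⟩, by simp [flowValue]⟩

lemma bddAbove_FSet (hst : s ≠ t) : BddAbove (FSet c s t) := by
  refine ⟨cap c (univ.erase t), ?_⟩
  rintro n ⟨f, hf, hv⟩
  have hs : s ∈ univ.erase t := mem_erase.mpr ⟨hst, mem_univ s⟩
  have ht : t ∉ univ.erase t := fun h => (mem_erase.mp h).1 rfl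
  have h := flowValue_le_cap hf hs ht
  rw [hv] at h
  exact_mod_cast h

lemma exists_max (c : V → V → ℕ) (hst : s ≠ t) :
    ∃ f : V → V → ℕ, IsFlow c s t f ∧ flowValue f s = (maxFlow c s t : ℤ) :=
  Nat.sSup_mem ⟨0, zero_mem_FSet⟩ (bddAbove_FSet hst)

lemma maxFlow_le_cap {S : Finset V} (hs : s ∈ S) (ht : t ∉ S) :
    maxFlow c s t ≤ cap c S := by
  rw [maxFlow_eq]
  refine csSup_le ⟨0, zero_mem_FSet⟩ ?_
  rintro n ⟨f, hf, hv⟩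
  have h := flowValue_le_cap hf hs ht
  rw [hv] at h
  exact_mod_cast h

end NetFlow
namespace NetFlow

variable {V : Type*} [Fintype V] [DecidableEq V]

/-- residual relation -/
def rres (c f : V → V → ℕ) : V → V → Prop :=
  fun u w => u ≠ w ∧ (f u w < c u w ∨ 0 < f w u)

/-- push one unit along arc (u,w): either cancel reverse flow or add forward flow -/
def bump (f : V → V → ℕ) (u w : V) : V → V → ℕ :=
  if 0 < f w u then fun a b => if a = w ∧ b = u then f a b - 1 else f a b
  else fun a b => if a = u ∧ b = w then f a b + 1 else f a b

variable {c : V → V → ℕ} {s t : V} {f : V → V → ℕ}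

lemma flowValue_inc {u w : V} (huw : u ≠ w) (f : V → V → ℕ) (z : V) :
    flowValue (fun a b => if a = u ∧ b = w then f a b + 1 else f a b) z
      = flowValue f z + (if z = u then 1 else 0) - (if z = w then 1 else 0) := by
  unfold flowValue
  have e1 : ∑ y ∈ univ.erase z, ((if z = u ∧ y = w then f z y + 1 else f z y : ℕ) : ℤ)
      = (∑ y ∈ univ.erase z, (f z y : ℤ)) + (if z = u then 1 else 0) := by
    have h : ∀ y ∈ univ.erase z, ((if z = u ∧ y = w then f z y + 1 else f z y : ℕ) : ℤ)
        = (f z y : ℤ) + (if z = u ∧ y = w then 1 else 0) := by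
      intro y _; split_ifs with h <;> push_cast <;> ring
    rw [Finset.sum_congr rfl h, Finset.sum_add_distrib]
    congr 1
    by_cases hz : z = u
    · simp only [hz, eq_self_iff_true, true_and]
      rw [Finset.sum_ite_eq' (univ.erase u) w (fun _ => (1 : ℤ))]
      simp [huw.symm]
    · simp [hz]
  have e2 : ∑ y ∈ univ.erase z, ((if y = u ∧ z = w then f y z + 1 else f y z : ℕ) : ℤ)
      = (∑ y ∈ univ.erase z, (f y z : ℤ)) + (if z = w then 1 else 0) := by
    have h : ∀ y ∈ univ.erase z, ((if y = u ∧ z = w then f y z + 1 else f y z : ℕ) : ℤ)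
        = (f y z : ℤ) + (if y = u ∧ z = w then 1 else 0) := by
      intro y _; split_ifs with h <;> push_cast <;> ring
    rw [Finset.sum_congr rfl h, Finset.sum_add_distrib]
    congr 1
    by_cases hz : z = w
    · simp only [hz, eq_self_iff_true, and_true]
      rw [Finset.sum_ite_eq' (univ.erase w) u (fun _ => (1 : ℤ))]
      simp [huw]
    · simp [hz]
  rw [e1, e2]; ring

lemma flowValue_dec {u w : V} (huw : u ≠ w) (f : V → V → ℕ) (hpos : 0 < f u w) (z : V) :
    flowValue (fun a b => if a = u ∧ b = w then f a b - 1 else f a b) z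
      = flowValue f z - (if z = u then 1 else 0) + (if z = w then 1 else 0) := by
  unfold flowValue
  have e1 : ∑ y ∈ univ.erase z, ((if z = u ∧ y = w then f z y - 1 else f z y : ℕ) : ℤ)
      = (∑ y ∈ univ.erase z, (f z y : ℤ)) - (if z = u then 1 else 0) := by
    have h : ∀ y ∈ univ.erase z, ((if z = u ∧ y = w then f z y - 1 else f z y : ℕ) : ℤ)
        = (f z y : ℤ) - (if z = u ∧ y = w then 1 else 0) := by
      intro y _; split_ifs with h
      · obtain ⟨rfl, rfl⟩ := h
        omega
      · ring
    rw [Finset.sum_congr rfl h, Finset.sum_sub_distrib]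
    congr 1
    by_cases hz : z = u
    · simp only [hz, eq_self_iff_true, true_and]
      rw [Finset.sum_ite_eq' (univ.erase u) w (fun _ => (1 : ℤ))]
      simp [huw.symm]
    · simp [hz]
  have e2 : ∑ y ∈ univ.erase z, ((if y = u ∧ z = w then f y z - 1 else f y z : ℕ) : ℤ)
      = (∑ y ∈ univ.erase z, (f y z : ℤ)) - (if z = w then 1 else 0) := by
    have h : ∀ y ∈ univ.erase z, ((if y = u ∧ z = w then f y z - 1 else f y z : ℕ) : ℤ)
        = (f y z : ℤ) - (if y = u ∧ z = w then 1 else 0) := by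
      intro y _; split_ifs with h
      · obtain ⟨rfl, rfl⟩ := h
        omega
      · ring
    rw [Finset.sum_congr rfl h, Finset.sum_sub_distrib]
    congr 1
    by_cases hz : z = w
    · simp only [hz, eq_self_iff_true, and_true]
      rw [Finset.sum_ite_eq' (univ.erase w) u (fun _ => (1 : ℤ))]
      simp [huw]
    · simp [hz]
  rw [e1, e2]; ring

lemma flowValue_bump {u w : V} (huw : u ≠ w)
    (hres : f u w < c u w ∨ 0 < f w u) (z : V) :
    flowValue (bump f u w) z
      = flowValue f z + (if z = u then 1 else 0) - (if z = w then 1 else 0) := by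
  unfold bump
  by_cases hpos : 0 < f w u
  · rw [if_pos hpos, flowValue_dec huw.symm f hpos z]
    split_ifs <;> ring
  · rw [if_neg hpos]
    exact flowValue_inc huw f z

lemma bump_capacity {u w : V} (huw : u ≠ w)
    (hres : f u w < c u w ∨ 0 < f w u) (hfc : ∀ a b : V, a ≠ b → f a b ≤ c a b) :
    ∀ a b : V, a ≠ b → bump f u w a b ≤ c a b := by
  intro a b hab
  unfold bump
  by_cases hpos : 0 < f w u
  · rw [if_pos hpos]
    split_ifs with h
    · exact le_trans (Nat.sub_le _ _) (hfc a b hab)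
    · exact hfc a b hab
  · rw [if_neg hpos]
    split_ifs with h
    · obtain ⟨rfl, rfl⟩ := h
      have : f a b < c a b := hres.resolve_right hpos
      omega
    · exact hfc a b hab

lemma bump_untouched {u w a b : V} (ha : a ≠ u) (hb : b ≠ u) (f : V → V → ℕ) :
    bump f u w a b = f a b := by
  unfold bump
  by_cases hpos : 0 < f w u <;> simp [hpos, ha, hb]

end NetFlow
namespace NetFlow

variable {V : Type*} [Fintype V] [DecidableEq V]

lemma exists_nodup_chain' {α : Type*} (r : α → α → Prop) :
    ∀ (n : ℕ) (l : List α), l.length ≤ n → List.IsChain r l →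
      ∃ l', List.IsChain r l' ∧ l'.head? = l.head? ∧ l'.getLast? = l.getLast?
        ∧ l'.Nodup ∧ ∀ x ∈ l', x ∈ l := by
  intro n
  induction n with
  | zero =>
    intro l hl _
    have : l = [] := List.eq_nil_of_length_eq_zero (Nat.le_zero.mp hl)
    subst this
    exact ⟨[], List.isChain_nil, rfl, rfl, List.nodup_nil, fun x hx => hx⟩
  | succ n ih =>
    intro l hl hch
    match l with
    | [] => exact ⟨[], List.isChain_nil, rfl, rfl, List.nodup_nil, fun x hx => hx⟩
    | a :: rest =>
      by_cases ha : a ∈ rest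
      · obtain ⟨u, w, hw⟩ := List.append_of_mem ha
        have hsuff : (a :: w) <:+ (a :: rest) := by
          rw [hw]
          exact ⟨a :: u, by simp⟩
        have hch' : List.IsChain r (a :: w) := hch.suffix hsuff
        have hlen : (a :: w).length ≤ n := by
          have hlw := congrArg List.length hw
          simp only [List.length_append, List.length_cons] at hlw
          simp only [List.length_cons] at hl ⊢
          omega
        obtain ⟨l', h1, h2, h3, h4, h5⟩ := ih (a :: w) hlen hch'
        refine ⟨l', h1, by simpa using h2, ?_, h4, fun x hx => hsuff.subset (h5 x hx)⟩
        rw [h3, hw]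
        have : (a :: (u ++ a :: w)).getLast? = (a :: w).getLast? := by
          have h6 : a :: (u ++ a :: w) = (a :: u) ++ (a :: w) := by simp
          rw [h6, List.getLast?_append,
            List.getLast?_eq_getLast (List.cons_ne_nil a w)]
          rfl
        rw [this]
      · match rest with
        | [] =>
          exact ⟨[a], hch, rfl, rfl, by simp, fun x hx => hx⟩
        | b :: rest' =>
          have hchr : List.IsChain r (b :: rest') := (List.isChain_cons.mp hch).2
          have hlen : (b :: rest').length ≤ n := by simp at hl ⊢; omega
          obtain ⟨l', h1, h2, h3, h4, h5⟩ := ih (b :: rest') hlen hchr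
          have hl'ne : l' ≠ [] := by
            intro h; rw [h] at h2; simp at h2
          refine ⟨a :: l', ?_, rfl, ?_, ?_, ?_⟩
          · rw [List.isChain_cons]
            refine ⟨?_, h1⟩
            intro y hy
            rw [h2] at hy
            simp at hy
            have := (List.isChain_cons.mp hch).1
            exact hy ▸ this b rfl
          · rw [List.getLast?_cons_cons]
            rw [← h3]
            match l', hl'ne with
            | c :: l'', _ => rw [List.getLast?_cons_cons]
          · rw [List.nodup_cons]
            exact ⟨fun h => ha (h5 a h), h4⟩
          · intro x hx
            rcases List.mem_cons.mp hx with rfl | hx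
            · exact List.mem_cons_self
            · exact List.mem_cons_of_mem _ (h5 x hx)

variable {c : V → V → ℕ} {s t : V} {f : V → V → ℕ}

lemma move (hf : IsFlow c s t f) :
    ∀ (l : List V) (a : V) (g : V → V → ℕ),
      List.IsChain (rres c f) (a :: l) →
      (a :: l).Nodup → s ∉ (a :: l) → (a :: l).getLast (List.cons_ne_nil a l) = t →
      (∀ p q : V, p ≠ q → g p q ≤ c p q) →
      (∀ p q : V, p ∈ a :: l → q ∈ a :: l → g p q = f p q) →
      flowValue g s = flowValue f s + 1 →
      flowValue g a = flowValue f a - 1 →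
      (∀ z : V, z ≠ s → z ≠ a → flowValue g z = flowValue f z) →
      ∃ g', IsFlow c s t g' ∧ flowValue g' s = flowValue f s + 1 := by
  intro l
  induction l with
  | nil =>
    intro a g _ _ hsn hlast hcap _ hs _ hz
    have hat : a = t := hlast
    subst hat
    refine ⟨g, ⟨hcap, ?_⟩, hs⟩
    intro z hzs hzt
    rw [← conserve_iff, hz z hzs hzt, conserve_iff]
    exact hf.2 z hzs hzt
  | cons b l ih =>
    intro a g hchain hnd hsn hlast hcap hag hs ha hz
    obtain ⟨⟨hne, hres⟩, hchain'⟩ := List.isChain_cons_cons.mp hchain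
    have hgab : g a b = f a b := hag a b (by simp) (by simp)
    have hgba : g b a = f b a := hag b a (by simp) (by simp)
    have hresg : g a b < c a b ∨ 0 < g b a := by rw [hgab, hgba]; exact hres
    have hanotin : a ∉ b :: l := (List.nodup_cons.mp hnd).1
    have hndbl : (b :: l).Nodup := (List.nodup_cons.mp hnd).2
    have hsb : s ∉ b :: l := fun h => hsn (List.mem_cons_of_mem a h)
    have hsa : s ≠ a := fun h => hsn (by rw [h]; exact List.mem_cons_self)
    have hsb' : s ≠ b := fun h => hsb (by rw [h]; exact List.mem_cons_self)
    have hba : b ≠ a := fun h => hanotin (by rw [← h]; exact List.mem_cons_self)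
    have hlast' : (b :: l).getLast (List.cons_ne_nil b l) = t := by
      rw [← hlast]; exact (List.getLast_cons _).symm
    refine ih b (bump g a b) hchain' hndbl hsb hlast' ?_ ?_ ?_ ?_ ?_
    · exact bump_capacity hne hresg hcap
    · intro p q hp hq
      have hpa : p ≠ a := fun h => hanotin (h ▸ hp)
      have hqa : q ≠ a := fun h => hanotin (h ▸ hq)
      rw [bump_untouched hpa hqa g]
      exact hag p q (List.mem_cons_of_mem a hp) (List.mem_cons_of_mem a hq)
    · rw [flowValue_bump (c := c) hne hresg s, if_neg hsa, if_neg hsb', hs]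
      ring
    · rw [flowValue_bump (c := c) hne hresg b, if_neg hba, if_pos rfl,
        hz b hsb'.symm hba]
      ring
    · intro z hzs hzb
      by_cases hza : z = a
      · subst hza
        rw [flowValue_bump (c := c) hne hresg z, if_pos rfl, if_neg hzb, ha]
        ring
      · rw [flowValue_bump (c := c) hne hresg z, if_neg hza, if_neg hzb,
          hz z hzs hza]
        ring

lemma exists_better (hf : IsFlow c s t f) (hst : s ≠ t)
    (h : Relation.ReflTransGen (rres c f) s t) :
    ∃ g : V → V → ℕ, IsFlow c s t g ∧ flowValue g s = flowValue f s + 1 := by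
  obtain ⟨l, hchain, hlast⟩ := List.exists_isChain_cons_of_relationReflTransGen h
  have hch' : List.IsChain (rres c f) (s :: l) := hchain
  have hlast? : (s :: l).getLast? = some t := by
    rw [List.getLast?_eq_getLast (List.cons_ne_nil s l), hlast]
  obtain ⟨l', h1, h2, h3, h4, h5⟩ :=
    exists_nodup_chain' (rres c f) (s :: l).length (s :: l) le_rfl hch'
  rw [hlast?] at h3
  have hheads : l'.head? = some s := by simpa using h2
  match l', hheads, h3, h1, h4 with
  | [], hh, _, _, _ => simp at hh
  | [x], hh, h3, _, _ =>
    simp at hh h3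
    exact absurd (hh.symm.trans h3) hst
  | x :: b :: l₂, hh, h3, h1, h4 =>
    simp only [List.head?_cons, Option.some.injEq] at hh
    subst hh
    obtain ⟨hne, hres⟩ : rres c f x b := (List.isChain_cons_cons.mp h1).1
    have hch2 : List.IsChain (rres c f) (b :: l₂) := (List.isChain_cons_cons.mp h1).2
    have hnd2 : (b :: l₂).Nodup := (List.nodup_cons.mp h4).2
    have hsnot : x ∉ b :: l₂ := (List.nodup_cons.mp h4).1
    have hlast2 : (b :: l₂).getLast (List.cons_ne_nil b l₂) = t := by
      rw [List.getLast?_cons_cons, List.getLast?_eq_getLast (List.cons_ne_nil b l₂)] at h3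
      exact Option.some.inj h3
    have hsb : x ≠ b := fun h => hsnot (by rw [h]; exact List.mem_cons_self)
    refine move hf l₂ b (bump f x b) hch2 hnd2 hsnot hlast2 ?_ ?_ ?_ ?_ ?_
    · exact bump_capacity hne hres hf.1
    · intro p q hp hq
      have hps : p ≠ x := fun h => hsnot (h ▸ hp)
      have hqs : q ≠ x := fun h => hsnot (h ▸ hq)
      exact bump_untouched hps hqs f
    · rw [flowValue_bump (c := c) hne hres x, if_pos rfl, if_neg hsb]
      ring
    · rw [flowValue_bump (c := c) hne hres b, if_neg hsb.symm, if_pos rfl]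
      ring
    · intro z hzs hzb
      rw [flowValue_bump (c := c) hne hres z, if_neg hzs, if_neg hzb]
      ring

lemma exists_cut (c : V → V → ℕ) (hst : s ≠ t) :
    ∃ S : Finset V, s ∈ S ∧ t ∉ S ∧ maxFlow c s t = cap c S := by
  classical
  obtain ⟨f, hf, hv⟩ := exists_max c hst
  set S : Finset V := univ.filter (fun u => Relation.ReflTransGen (rres c f) s u) with hS
  have hsS : s ∈ S := Finset.mem_filter.mpr ⟨Finset.mem_univ _, Relation.ReflTransGen.refl⟩
  have htS : t ∉ S := by
    intro h
    obtain ⟨g, hg, hgv⟩ := exists_better hf hst ((Finset.mem_filter.mp h).2)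
    have hmem : maxFlow c s t + 1 ∈ FSet c s t :=
      ⟨g, hg, by rw [hgv, hv]; push_cast; ring⟩
    have hle := le_csSup (bddAbove_FSet hst) hmem
    rw [← maxFlow_eq] at hle
    omega
  have hacross : ∀ u ∈ S, ∀ w ∈ Sᶜ, f u w = c u w ∧ f w u = 0 := by
    intro u hu w hw
    have hw' : w ∉ S := Finset.mem_compl.mp hw
    have hne : u ≠ w := fun h => hw' (h ▸ hu)
    by_contra hcon
    have hr : rres c f u w := by
      refine ⟨hne, ?_⟩
      rcases not_and_or.mp hcon with h | h
      · exact Or.inl (lt_of_le_of_ne (hf.1 u w hne) h)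
      · exact Or.inr (Nat.pos_of_ne_zero h)
    exact hw' (Finset.mem_filter.mpr
      ⟨Finset.mem_univ _, ((Finset.mem_filter.mp hu).2).tail hr⟩)
  refine ⟨S, hsS, htS, ?_⟩
  have hci := cut_identity hf hsS htS
  rw [hv] at hci
  have hfin : (maxFlow c s t : ℤ) = cap c S := by
    rw [hci, cap]
    push_cast
    refine Finset.sum_congr rfl fun u hu => Finset.sum_congr rfl fun w hw => ?_
    obtain ⟨h1, h2⟩ := hacross u hu w hw
    rw [h1, h2]
    simp
  exact_mod_cast hfin

end NetFlow
namespace NetFlow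

variable {V : Type*} [Fintype V] [DecidableEq V] {c : V → V → ℕ}

lemma cap_expand {S : Finset V} {a b : V} (ha : a ∈ S) (hb : b ∉ S) :
    cap c S = c a b + ∑ w ∈ Sᶜ.erase b, c a w + ∑ u ∈ S.erase a, c u b
      + ∑ u ∈ S.erase a, ∑ w ∈ Sᶜ.erase b, c u w := by
  have hbS : b ∈ Sᶜ := Finset.mem_compl.mpr hb
  have inner : ∀ u : V, ∑ w ∈ Sᶜ, c u w = c u b + ∑ w ∈ Sᶜ.erase b, c u w := by
    intro u
    conv_lhs => rw [← Finset.insert_erase hbS]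
    rw [Finset.sum_insert (Finset.notMem_erase b Sᶜ)]
  calc cap c S = ∑ u ∈ S, (c u b + ∑ w ∈ Sᶜ.erase b, c u w) := by
        rw [cap]; exact Finset.sum_congr rfl fun u _ => inner u
    _ = (c a b + ∑ w ∈ Sᶜ.erase b, c a w)
          + ∑ u ∈ S.erase a, (c u b + ∑ w ∈ Sᶜ.erase b, c u w) := by
        rw [← Finset.add_sum_erase S (fun u => c u b + ∑ w ∈ Sᶜ.erase b, c u w) ha]
    _ = _ := by rw [Finset.sum_add_distrib]; ring

lemma univ_erase_split {S : Finset V} {a b : V} (ha : a ∈ S) (hb : b ∉ S) :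
    Finset.univ.erase a = insert b ((S.erase a) ∪ (Sᶜ.erase b)) := by
  ext z
  simp only [Finset.mem_erase, Finset.mem_univ, and_true, Finset.mem_insert,
    Finset.mem_union, Finset.mem_compl]
  constructor
  · intro hz
    by_cases hzb : z = b
    · exact Or.inl hzb
    · by_cases hzS : z ∈ S
      · exact Or.inr (Or.inl ⟨hz, hzS⟩)
      · exact Or.inr (Or.inr ⟨hzb, hzS⟩)
  · rintro (rfl | ⟨h, _⟩ | ⟨_, h⟩)
    · rintro rfl; exact hb ha
    · exact h
    · rintro rfl; exact h ha

lemma univ_erase_split' {S : Finset V} {a b : V} (ha : a ∈ S) (hb : b ∉ S) :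
    Finset.univ.erase b = insert a ((S.erase a) ∪ (Sᶜ.erase b)) := by
  ext z
  simp only [Finset.mem_erase, Finset.mem_univ, and_true, Finset.mem_insert,
    Finset.mem_union, Finset.mem_compl]
  constructor
  · intro hz
    by_cases hza : z = a
    · exact Or.inl hza
    · by_cases hzS : z ∈ S
      · exact Or.inr (Or.inl ⟨hza, hzS⟩)
      · exact Or.inr (Or.inr ⟨hz, hzS⟩)
  · rintro (rfl | ⟨_, h⟩ | ⟨h, _⟩)
    · rintro rfl; exact hb ha
    · rintro rfl; exact hb h
    · exact h

lemma TU_disjoint (S : Finset V) (a b : V) :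
    Disjoint (S.erase a) (Sᶜ.erase b) :=
  Finset.disjoint_left.mpr fun z hz1 hz2 =>
    (Finset.mem_compl.mp (Finset.mem_of_mem_erase hz2)) (Finset.mem_of_mem_erase hz1)

lemma outdeg_expand₁ {S : Finset V} {a b : V} (ha : a ∈ S) (hb : b ∉ S) :
    outdeg c a = c a b + (∑ u ∈ S.erase a, c a u + ∑ w ∈ Sᶜ.erase b, c a w) := by
  have hbnot : b ∉ (S.erase a) ∪ (Sᶜ.erase b) := by
    simp only [Finset.mem_union, Finset.mem_erase, Finset.mem_compl, not_or]
    exact ⟨fun h => hb h.2, fun h => h.1 rfl⟩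
  rw [outdeg, univ_erase_split ha hb, Finset.sum_insert hbnot,
    Finset.sum_union (TU_disjoint S a b)]

lemma outdeg_expand₂ {S : Finset V} {a b : V} (ha : a ∈ S) (hb : b ∉ S) :
    outdeg c b = c b a + (∑ u ∈ S.erase a, c b u + ∑ w ∈ Sᶜ.erase b, c b w) := by
  have hanot : a ∉ (S.erase a) ∪ (Sᶜ.erase b) := by
    simp only [Finset.mem_union, Finset.mem_erase, Finset.mem_compl, not_or]
    exact ⟨fun h => h.1 rfl, fun h => h.2 ha⟩
  rw [outdeg, univ_erase_split' ha hb, Finset.sum_insert hanot,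
    Finset.sum_union (TU_disjoint S a b)]

lemma swap_compl {S : Finset V} {a b : V} (hab : a ≠ b) (ha : a ∈ S) (hb : b ∉ S) :
    (insert b (S.erase a))ᶜ = insert a (Sᶜ.erase b) := by
  ext z
  simp only [Finset.mem_compl, Finset.mem_insert, Finset.mem_erase]
  constructor
  · intro h
    push_neg at h
    by_cases hza : z = a
    · exact Or.inl hza
    · exact Or.inr ⟨h.1, h.2 hza⟩
  · rintro (rfl | ⟨h1, h2⟩)
    · push_neg
      exact ⟨hab, fun h _ => h rfl⟩
    · push_neg
      exact ⟨h1, fun _ => h2⟩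
  -- note: push_neg direction on membership ¬(z = b ∨ z ≠ a ∧ z ∈ S)

lemma swap_card {S : Finset V} {a b : V} (ha : a ∈ S) (hb : b ∉ S) :
    (insert b (S.erase a)).card = S.card := by
  rw [Finset.card_insert_of_notMem (fun h => hb (Finset.mem_of_mem_erase h)),
    Finset.card_erase_of_mem ha]
  have : 0 < S.card := Finset.card_pos.mpr ⟨a, ha⟩
  omega

lemma swap_compl_card {S : Finset V} {a b : V} (ha : a ∈ S) (hb : b ∉ S) :
    ((insert b (S.erase a))ᶜ).card = Sᶜ.card := by
  rw [Finset.card_compl, Finset.card_compl, swap_card ha hb]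

lemma bal_key {k : ℕ} (hbal : ∀ x y : V, x ≠ y → c x y + c y x = k)
    {S : Finset V} {a b : V} (hab : a ≠ b) (ha : a ∈ S) (hb : b ∉ S) :
    cap c (insert b (S.erase a)) + outdeg c a = cap c S + outdeg c b := by
  have hbS' : b ∈ insert b (S.erase a) := Finset.mem_insert_self _ _
  have haS' : a ∉ insert b (S.erase a) := by
    simp only [Finset.mem_insert, Finset.mem_erase, not_or]
    exact ⟨hab, fun h => h.1 rfl⟩
  have he1 : (insert b (S.erase a)).erase b = S.erase a :=
    Finset.erase_insert (fun h => hb (Finset.mem_of_mem_erase h))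
  have he2 : ((insert b (S.erase a))ᶜ).erase a = Sᶜ.erase b := by
    rw [swap_compl hab ha hb]
    exact Finset.erase_insert (by
      simp only [Finset.mem_erase, Finset.mem_compl, not_and]
      exact fun _ h => h ha)
  have hTsum : ∑ u ∈ S.erase a, c u a + ∑ u ∈ S.erase a, c a u
      = ∑ u ∈ S.erase a, c u b + ∑ u ∈ S.erase a, c b u := by
    rw [← Finset.sum_add_distrib, ← Finset.sum_add_distrib]
    refine Finset.sum_congr rfl fun u hu => ?_
    have hua : u ≠ a := (Finset.mem_erase.mp hu).1
    have hub : u ≠ b := fun h => hb (h ▸ (Finset.mem_erase.mp hu).2)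
    rw [hbal u a hua, hbal u b hub]
  rw [cap_expand hbS' haS', he1, he2, cap_expand ha hb,
    outdeg_expand₁ ha hb, outdeg_expand₂ ha hb]
  omega

lemma bal_oi {k : ℕ} (hbal : ∀ x y : V, x ≠ y → c x y + c y x = k) (u : V) :
    outdeg c u + indeg c u = (Fintype.card V - 1) * k := by
  rw [outdeg, indeg, ← Finset.sum_add_distrib,
    Finset.sum_congr rfl (fun w hw => hbal u w (Ne.symm (Finset.mem_erase.mp hw).1)),
    Finset.sum_const, smul_eq_mul, Finset.card_erase_of_mem (Finset.mem_univ u),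
    Finset.card_univ]

section W1
variable {ω : V → ℕ}

lemma w1_cap (hw : ∀ x y : V, x ≠ y → c x y = ω x) (S : Finset V) :
    cap c S = (∑ u ∈ S, ω u) * Sᶜ.card := by
  rw [cap, Finset.sum_mul]
  refine Finset.sum_congr rfl fun u hu => ?_
  rw [Finset.sum_congr rfl
      (fun w hw' => hw u w (fun h => (Finset.mem_compl.mp hw') (h ▸ hu))),
    Finset.sum_const, smul_eq_mul, mul_comm]

lemma w1_outdeg (hw : ∀ x y : V, x ≠ y → c x y = ω x) (u : V) :
    outdeg c u = (Fintype.card V - 1) * ω u := by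
  rw [outdeg,
    Finset.sum_congr rfl (fun w hw' => hw u w (Ne.symm (Finset.mem_erase.mp hw').1)),
    Finset.sum_const, smul_eq_mul, Finset.card_erase_of_mem (Finset.mem_univ u),
    Finset.card_univ]

lemma w1_indeg (hw : ∀ x y : V, x ≠ y → c x y = ω x) (u : V) :
    indeg c u + ω u = ∑ w, ω w := by
  rw [indeg, Finset.sum_congr rfl (fun w hw' => hw w u (Finset.mem_erase.mp hw').1)]
  exact Finset.sum_erase_add _ _ (Finset.mem_univ u)

end W1

section W2
variable {ω : V → ℕ}

lemma w2_cap (hw : ∀ x y : V, x ≠ y → c x y = ω y) (S : Finset V) :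
    cap c S = S.card * ∑ w ∈ Sᶜ, ω w := by
  rw [cap,
    Finset.sum_congr rfl (fun u hu => Finset.sum_congr rfl
      (fun w hw' => hw u w (fun h => (Finset.mem_compl.mp hw') (h ▸ hu)))),
    Finset.sum_const, smul_eq_mul]

lemma w2_outdeg (hw : ∀ x y : V, x ≠ y → c x y = ω y) (u : V) :
    outdeg c u + ω u = ∑ w, ω w := by
  rw [outdeg, Finset.sum_congr rfl (fun w hw' => hw u w (Ne.symm (Finset.mem_erase.mp hw').1))]
  exact Finset.sum_erase_add _ _ (Finset.mem_univ u)

lemma w2_indeg (hw : ∀ x y : V, x ≠ y → c x y = ω y) (u : V) :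
    indeg c u = (Fintype.card V - 1) * ω u := by
  rw [indeg,
    Finset.sum_congr rfl (fun w hw' => hw w u (Finset.mem_erase.mp hw').1),
    Finset.sum_const, smul_eq_mul, Finset.card_erase_of_mem (Finset.mem_univ u),
    Finset.card_univ]

end W2

lemma flowrel_iff_outdeg
    (H_le : ∀ a b : V, a ≠ b → outdeg c b ≤ outdeg c a → ∀ S : Finset V, a ∈ S → b ∉ S →
      cap c (insert b (S.erase a)) ≤ cap c S)
    (H_lt : ∀ a b : V, a ≠ b → outdeg c b < outdeg c a → ∀ S : Finset V, a ∈ S → b ∉ S →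
      cap c (insert b (S.erase a)) < cap c S) :
    ∀ x y : V, FlowRel c x y ↔ outdeg c y ≤ outdeg c x := by
  have main : ∀ x y : V, x ≠ y → outdeg c y ≤ outdeg c x →
      maxFlow c y x ≤ maxFlow c x y := by
    intro x y hxy hle
    obtain ⟨S, hxS, hyS, hcap⟩ := exists_cut c hxy
    have hyin : y ∈ insert y (S.erase x) := Finset.mem_insert_self _ _
    have hxout : x ∉ insert y (S.erase x) := by
      simp [Finset.mem_insert, Finset.mem_erase, hxy]
    calc maxFlow c y x ≤ cap c (insert y (S.erase x)) := maxFlow_le_cap hyin hxout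
      _ ≤ cap c S := H_le x y hxy hle S hxS hyS
      _ = maxFlow c x y := hcap.symm
  have mainlt : ∀ x y : V, x ≠ y → outdeg c x < outdeg c y →
      maxFlow c x y < maxFlow c y x := by
    intro x y hxy hlt
    obtain ⟨S, hyS, hxS, hcap⟩ := exists_cut c hxy.symm
    have hxin : x ∈ insert x (S.erase y) := Finset.mem_insert_self _ _
    have hyout : y ∉ insert x (S.erase y) := by
      simp [Finset.mem_insert, Finset.mem_erase, hxy.symm]
    calc maxFlow c x y ≤ cap c (insert x (S.erase y)) := maxFlow_le_cap hxin hyout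
      _ < cap c S := H_lt y x hxy.symm hlt S hyS hxS
      _ = maxFlow c y x := hcap.symm
  intro x y
  by_cases hxy : x = y
  · subst hxy; simp [FlowRel]
  · constructor
    · intro hF
      by_contra hno
      push_neg at hno
      have hlt := mainlt x y hxy hno
      rcases hF with rfl | ⟨_, hle⟩
      · exact hxy rfl
      · omega
    · intro hle
      exact Or.inr ⟨hxy, main x y hxy hle⟩

end NetFlow

open NetFlow

/-- On balanced networks, and on networks whose capacities depend only on the
start vertex or only on the end vertex of each arc, the flow relation, the
Borda relation and the dual Borda relation coincide. -/
theorem stmt15 {V : Type*} [Fintype V] [DecidableEq V]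
    (hV : 2 ≤ Fintype.card V) (c : V → V → ℕ)
    (hclass :
      (∃ k : ℕ, ∀ x y : V, x ≠ y → c x y + c y x = k) ∨
      (∃ ω₁ : V → ℕ, ∀ x y : V, x ≠ y → c x y = ω₁ x) ∨
      (∃ ω₂ : V → ℕ, ∀ x y : V, x ≠ y → c x y = ω₂ y)) :
    (∀ x y : V, FlowRel c x y ↔ outdeg c y ≤ outdeg c x) ∧
    (∀ x y : V, FlowRel c x y ↔ indeg c x ≤ indeg c y) := by
  classical
  have hn : 0 < Fintype.card V - 1 := by omega
  rcases hclass with ⟨k, hk⟩ | ⟨ω, hw⟩ | ⟨ω, hw⟩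
  · -- balanced
    have H_le : ∀ a b : V, a ≠ b → outdeg c b ≤ outdeg c a → ∀ S : Finset V,
        a ∈ S → b ∉ S → cap c (insert b (S.erase a)) ≤ cap c S := by
      intro a b hab hle S ha hb
      have := bal_key hk hab ha hb
      omega
    have H_lt : ∀ a b : V, a ≠ b → outdeg c b < outdeg c a → ∀ S : Finset V,
        a ∈ S → b ∉ S → cap c (insert b (S.erase a)) < cap c S := by
      intro a b hab hlt S ha hb
      have := bal_key hk hab ha hb
      omega
    have h1 := flowrel_iff_outdeg H_le H_lt
    have hoi : ∀ x y : V, outdeg c y ≤ outdeg c x ↔ indeg c x ≤ indeg c y := by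
      intro x y
      have hx := bal_oi hk x
      have hy := bal_oi hk y
      omega
    exact ⟨h1, fun x y => (h1 x y).trans (hoi x y)⟩
  · -- capacities depend on start vertex
    have hout : ∀ u : V, outdeg c u = (Fintype.card V - 1) * ω u := w1_outdeg hw
    have hcapS : ∀ S : Finset V, cap c S = (∑ u ∈ S, ω u) * Sᶜ.card := w1_cap hw
    have hsum : ∀ (S : Finset V) (a b : V), a ∈ S → b ∉ S →
        (∑ u ∈ insert b (S.erase a), ω u) = ω b + ∑ u ∈ S.erase a, ω u := by
      intro S a b ha hb
      exact Finset.sum_insert (fun h => hb (Finset.mem_of_mem_erase h))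
    have hsumS : ∀ (S : Finset V) (a : V), a ∈ S →
        (∑ u ∈ S, ω u) = ω a + ∑ u ∈ S.erase a, ω u := by
      intro S a ha
      exact (Finset.add_sum_erase S ω ha).symm
    have H_le : ∀ a b : V, a ≠ b → outdeg c b ≤ outdeg c a → ∀ S : Finset V,
        a ∈ S → b ∉ S → cap c (insert b (S.erase a)) ≤ cap c S := by
      intro a b hab hle S ha hb
      have hωle : ω b ≤ ω a := by
        rw [hout a, hout b] at hle
        exact Nat.le_of_mul_le_mul_left hle hn
      rw [hcapS, hcapS, swap_compl_card ha hb, hsum S a b ha hb, hsumS S a ha]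
      exact mul_le_mul_left (by omega) _
    have H_lt : ∀ a b : V, a ≠ b → outdeg c b < outdeg c a → ∀ S : Finset V,
        a ∈ S → b ∉ S → cap c (insert b (S.erase a)) < cap c S := by
      intro a b hab hlt S ha hb
      have hωlt : ω b < ω a := by
        rw [hout a, hout b] at hlt
        exact Nat.lt_of_mul_lt_mul_left hlt
      have hpos : 0 < Sᶜ.card := Finset.card_pos.mpr ⟨b, Finset.mem_compl.mpr hb⟩
      rw [hcapS, hcapS, swap_compl_card ha hb, hsum S a b ha hb, hsumS S a ha]
      exact mul_lt_mul_of_pos_right (by omega) hpos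
    have h1 := flowrel_iff_outdeg H_le H_lt
    have hoi : ∀ x y : V, outdeg c y ≤ outdeg c x ↔ indeg c x ≤ indeg c y := by
      intro x y
      have hix := w1_indeg hw x
      have hiy := w1_indeg hw y
      constructor
      · intro h
        have : ω y ≤ ω x := by
          rw [hout x, hout y] at h
          exact Nat.le_of_mul_le_mul_left h hn
        omega
      · intro h
        have : ω y ≤ ω x := by omega
        rw [hout x, hout y]
        exact Nat.mul_le_mul_left _ this
    exact ⟨h1, fun x y => (h1 x y).trans (hoi x y)⟩
  · -- capacities depend on end vertex
    have hout : ∀ u : V, outdeg c u + ω u = ∑ w, ω w := w2_outdeg hw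
    have hin : ∀ u : V, indeg c u = (Fintype.card V - 1) * ω u := w2_indeg hw
    have hcapS : ∀ S : Finset V, cap c S = S.card * ∑ w ∈ Sᶜ, ω w := w2_cap hw
    have hsumc : ∀ (S : Finset V) (a b : V), a ≠ b → a ∈ S → b ∉ S →
        (∑ w ∈ (insert b (S.erase a))ᶜ, ω w) = ω a + ∑ w ∈ Sᶜ.erase b, ω w := by
      intro S a b hab ha hb
      rw [swap_compl hab ha hb]
      exact Finset.sum_insert (by
        simp only [Finset.mem_erase, Finset.mem_compl, not_and]
        exact fun _ h => h ha)
    have hsumS : ∀ (S : Finset V) (b : V), b ∉ S →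
        (∑ w ∈ Sᶜ, ω w) = ω b + ∑ w ∈ Sᶜ.erase b, ω w := by
      intro S b hb
      exact (Finset.add_sum_erase Sᶜ ω (Finset.mem_compl.mpr hb)).symm
    have H_le : ∀ a b : V, a ≠ b → outdeg c b ≤ outdeg c a → ∀ S : Finset V,
        a ∈ S → b ∉ S → cap c (insert b (S.erase a)) ≤ cap c S := by
      intro a b hab hle S ha hb
      have hωle : ω a ≤ ω b := by
        have h1 := hout a
        have h2 := hout b
        omega
      rw [hcapS, hcapS, swap_card ha hb, hsumc S a b hab ha hb, hsumS S b hb]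
      exact mul_le_mul_right (by omega) _
    have H_lt : ∀ a b : V, a ≠ b → outdeg c b < outdeg c a → ∀ S : Finset V,
        a ∈ S → b ∉ S → cap c (insert b (S.erase a)) < cap c S := by
      intro a b hab hlt S ha hb
      have hωlt : ω a < ω b := by
        have h1 := hout a
        have h2 := hout b
        omega
      have hpos : 0 < S.card := Finset.card_pos.mpr ⟨a, ha⟩
      rw [hcapS, hcapS, swap_card ha hb, hsumc S a b hab ha hb, hsumS S b hb]
      exact mul_lt_mul_of_pos_left (by omega) hpos
    have h1 := flowrel_iff_outdeg H_le H_lt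
    have hoi : ∀ x y : V, outdeg c y ≤ outdeg c x ↔ indeg c x ≤ indeg c y := by
      intro x y
      have hox := hout x
      have hoy := hout y
      have hix := hin x
      have hiy := hin y
      constructor
      · intro h
        have : ω x ≤ ω y := by omega
        rw [hix, hiy]
        exact Nat.mul_le_mul_left _ this
      · intro h
        have : ω x ≤ ω y := by
          rw [hix, hiy] at h
          exact Nat.le_of_mul_le_mul_left h hn
        omega
    exact ⟨h1, fun x y => (h1 x y).trans (hoi x y)⟩
end

section
/- Let V be a finite nonempty set of size n, R a complete and quasi-acyclic relation on V, and k ∈ {1,…,n−1} (with n ≥ 2). Then the set of k-maximum sets of R equals the union, over all linear refinements L of R, of the sets of k-maximum sets of L: C_k(R) = ⋃_{L ∈ 𝐋_⋄(R)} C_k(L). In particular, 1 ≤ |C_k(R)| ≤ |𝐋_⋄(R)| and C_k(R) ≠ ∅. -/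
/-- `C_k(R)`: the set of `k`-maximum sets of the relation `R`. -/
def kMaxSets {V : Type*} [Fintype V] [DecidableEq V]
    (R : V → V → Prop) (k : ℕ) : Set (Finset V) :=
  {W : Finset V | W.card = k ∧ ∀ x ∈ W, ∀ y ∉ W, R x y}

lemma split_dup {V : Type*} : ∀ (m : List V) (a : V), List.Sublist [a, a] m →
    ∃ s u t, m = s ++ a :: (u ++ a :: t) := by
  intro m
  induction m with
  | nil => intro a h; simp at h
  | cons b m ih =>
    intro a h
    cases h with
    | cons _ h' =>
      obtain ⟨s, u, t, rfl⟩ := ih a h'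
      exact ⟨b :: s, u, t, rfl⟩
    | cons_cons _ h' =>
      have : b ∈ m := List.singleton_sublist.mp h'
      obtain ⟨u, t, rfl⟩ := List.append_of_mem this
      exact ⟨[], u, t, rfl⟩

lemma no_cycle {V : Type*} {P : V → V → Prop} (hi : Irreflexive P) (ha : AcyclicRel P) :
    ∀ (n : ℕ) (c : List V), c.length ≤ n → 2 ≤ c.length → c.Chain' P →
      c.head? = c.getLast? → False := by
  intro n
  induction n with
  | zero => intro c h h2 _ _; omega
  | succ n ih =>
    intro c hlen h2 hch hhl
    obtain ⟨x, d, rfl⟩ : ∃ x d, c = x :: d := by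
      cases c with
      | nil => simp at h2
      | cons a as => exact ⟨a, as, rfl⟩
    have hd : d ≠ [] := by intro h; subst h; simp at h2
    have hgl : (x :: d).getLast (by simp) = x := by
      have h1 : (x :: d).getLast? = some ((x :: d).getLast (by simp)) :=
        List.getLast?_eq_getLast_of_ne_nil (by simp)
      rw [← hhl] at h1
      simpa using h1.symm
    have hgl' : d.getLast hd = x := by rw [← hgl, List.getLast_cons hd]
    have hdecomp : d.dropLast ++ [x] = d := by
      rw [← hgl']; exact List.dropLast_append_getLast hd
    by_cases hnd : (x :: d.dropLast).Nodup
    · rcases List.eq_nil_or_concat d.dropLast with h0 | ⟨l, y, hly⟩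
      · have hdx : d = [x] := by rw [← hdecomp, h0]; rfl
        subst hdx
        exact hi x (by simpa [List.Chain', List.isChain_pair] using hch)
      · rw [List.concat_eq_append] at hly
        have hc' : x :: d = (x :: (l ++ [y])) ++ [x] := by
          rw [← hdecomp, hly]; simp
        rw [hc'] at hch; simp only [List.Chain'] at hch; rw [List.isChain_append] at hch
        obtain ⟨hch1, _, hrel⟩ := hch
        have hPyx : P y x := by
          apply hrel y _ x rfl
          show (x :: (l ++ [y])).getLast? = some y
          rw [show x :: (l ++ [y]) = (x :: l) ++ [y] by simp, List.getLast?_concat]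
        have hnd' : (x :: (l ++ [y])).Nodup := by rw [← hly]; exact hnd
        exact ha x y l hnd' hch1 hPyx
    · obtain ⟨a, hdup⟩ := List.exists_duplicate_iff_not_nodup.mpr hnd
      rw [List.duplicate_iff_sublist] at hdup
      obtain ⟨s, u, t, hsplit⟩ := split_dup _ a hdup
      have hxd : x :: d = (s ++ a :: (u ++ a :: t)) ++ [x] := by
        rw [← hsplit, List.cons_append, hdecomp]
      have hinfix : (a :: (u ++ [a])) <:+: (x :: d) := ⟨s, t ++ [x], by rw [hxd]; simp⟩
      refine ih (a :: (u ++ [a])) ?_ (by simp) (hch.infix hinfix) ?_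
      · have h1 := congrArg List.length hxd
        simp at h1 hlen ⊢
        omega
      · show some a = (a :: (u ++ [a])).getLast?
        rw [show a :: (u ++ [a]) = (a :: u) ++ [a] by simp, List.getLast?_concat]

lemma transGen_irrefl_of_acyclic {V : Type*} {P : V → V → Prop} (hi : Irreflexive P)
    (ha : AcyclicRel P) : Irreflexive (Relation.TransGen P) := by
  intro x hx
  obtain ⟨b, hxb, hbx⟩ := Relation.TransGen.tail'_iff.mp hx
  obtain ⟨l, hchain, hlast⟩ := List.exists_isChain_cons_of_relationReflTransGen hxb
  refine no_cycle hi ha ((x :: l) ++ [x]).length ((x :: l) ++ [x]) le_rfl (by simp) ?_ ?_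
  · simp only [List.Chain']; rw [List.isChain_append]
    refine ⟨hchain, List.isChain_singleton _, ?_⟩
    have hgb : (x :: l).getLast? = some b := by
      rw [List.getLast?_eq_getLast_of_ne_nil (by simp)]
      exact congrArg some hlast
    intro c hc y hy
    rw [hgb] at hc
    have hc' : b = c := Option.mem_some_iff.mp hc
    have hy' : y = x := (by simpa using hy : x = y).symm
    rw [← hc', hy']
    exact hbx
  · show ((x :: l) ++ [x]).head? = _
    rw [List.getLast?_concat]
    simp

lemma exists_linExt {V : Type*} (Q : V → V → Prop) (h : Irreflexive (Relation.TransGen Q)) :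
    ∃ L, IsLinearRel L ∧ ∀ x y, Q x y → L x y := by
  haveI : IsPartialOrder V (Relation.ReflTransGen Q) :=
    { refl := fun a => .refl
      trans := fun a b c hab hbc => hab.trans hbc
      antisymm := fun a b hab hba => by
        rcases Relation.reflTransGen_iff_eq_or_transGen.mp hab with rfl | hab'
        · rfl
        · rcases Relation.reflTransGen_iff_eq_or_transGen.mp hba with e | hba'
          · exact e
          · exact absurd (hab'.trans hba') (h a) }
  obtain ⟨s, hs, hsub⟩ := extend_partialOrder (Relation.ReflTransGen Q)
  haveI := hs
  exact ⟨s, ⟨fun x y => total_of s x y, fun a b c hab hbc => _root_.trans hab hbc,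
    fun x y h1 h2 => _root_.antisymm h1 h2⟩,
    fun x y hq => hsub _ _ (Relation.ReflTransGen.single hq)⟩

lemma linear_exists_kmax {V : Type*} [Fintype V] [DecidableEq V] (L : V → V → Prop)
    (hL : IsLinearRel L) (k : ℕ) (hk : k ≤ Fintype.card V) : ∃ W, W ∈ kMaxSets L k := by
  letI : LinearOrder V :=
    { le := L
      lt := fun a b => L a b ∧ ¬ L b a
      le_refl := fun a => (hL.1 a a).elim id id
      le_trans := fun a b c hab hbc => hL.2.1 hab hbc
      lt_iff_le_not_ge := fun a b => Iff.rfl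
      le_antisymm := hL.2.2
      le_total := hL.1
      toDecidableLE := fun a b => Classical.propDecidable _ }
  set l : List V := Finset.sort Finset.univ (· ≤ ·) with hldef
  have hnodup : l.Nodup := Finset.sort_nodup _ _
  have hlen : l.length = Fintype.card V := by
    rw [hldef, Finset.length_sort, Finset.card_univ]
  refine ⟨(l.take k).toFinset, ?_, ?_⟩
  · rw [List.toFinset_card_of_nodup (hnodup.sublist (List.take_sublist _ _)),
      List.length_take]
    omega
  · intro x hx y hy
    rw [List.mem_toFinset] at hx hy
    have hyl : y ∈ l := by rw [hldef, Finset.mem_sort]; exact Finset.mem_univ y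
    have hyd : y ∈ l.drop k := by
      rcases (List.mem_append.mp (by rwa [List.take_append_drop] : y ∈ l.take k ++ l.drop k))
        with h | h
      · exact absurd h hy
      · exact h
    exact (Finset.pairwise_sort Finset.univ (· ≤ ·)).rel_of_mem_take_of_mem_drop hx hyd

lemma linear_kmax_unique {V : Type*} [Fintype V] [DecidableEq V] {L : V → V → Prop}
    (hL : IsLinearRel L) {k : ℕ} {W W' : Finset V}
    (h : W ∈ kMaxSets L k) (h' : W' ∈ kMaxSets L k) : W = W' := by
  obtain ⟨hc, hm⟩ := h
  obtain ⟨hc', hm'⟩ := h'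
  by_contra hne
  have h1 : ¬ W ⊆ W' := fun hsub =>
    hne (Finset.eq_of_subset_of_card_le hsub (by rw [hc, hc']))
  have h2 : ¬ W' ⊆ W := fun hsub =>
    (hne (Finset.eq_of_subset_of_card_le hsub (by rw [hc, hc'])).symm)
  obtain ⟨w, hwW, hwW'⟩ := Finset.not_subset.mp h1
  obtain ⟨w', hw'W', hw'W⟩ := Finset.not_subset.mp h2
  have heq := hL.2.2 w w' (hm w hwW w' hw'W) (hm' w' hw'W' w hwW')
  exact hwW' (by rw [heq]; exact hw'W')

lemma exists_refinement_kmax {V : Type*} [Fintype V] [DecidableEq V] {R : V → V → Prop}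
    (hc : CompleteRel R) (ha : AcyclicRel (StrictPart R)) {k : ℕ} {W : Finset V}
    (hW : W ∈ kMaxSets R k) : ∃ L ∈ linRefinements R, W ∈ kMaxSets L k := by
  obtain ⟨hcard, hmax⟩ := hW
  have hSirr : Irreflexive (StrictPart R) := fun x hx => hx.2 hx.1
  have hStg : Irreflexive (Relation.TransGen (StrictPart R)) :=
    transGen_irrefl_of_acyclic hSirr ha
  set Q : V → V → Prop := fun x y => StrictPart R x y ∨ (x ∈ W ∧ y ∉ W) with hQ
  have hinv : ∀ u v, Q u v → u ∉ W → v ∉ W := by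
    intro u v huv hu hv
    rcases huv with hS | ⟨hu', _⟩
    · exact hS.2 (hmax v hv u hu)
    · exact hu hu'
  have claim1 : ∀ u v, Relation.ReflTransGen Q u v → v ∈ W →
      Relation.ReflTransGen (StrictPart R) u v ∧ u ∈ W := by
    intro u v h hv
    induction h using Relation.ReflTransGen.head_induction_on with
    | refl => exact ⟨.refl, hv⟩
    | @head a' c' hab _ ih =>
      obtain ⟨hrtg, hbW⟩ := ih
      have haW : a' ∈ W := by
        by_contra haW
        exact hinv _ _ hab haW hbW
      have hS' : StrictPart R a' c' := by
        rcases hab with h' | ⟨_, hb⟩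
        · exact h'
        · exact absurd hbW hb
      exact ⟨hrtg.head hS', haW⟩
  have claim2 : ∀ u v, Relation.ReflTransGen Q u v → u ∉ W →
      Relation.ReflTransGen (StrictPart R) u v ∧ v ∉ W := by
    intro u v h hu
    induction h with
    | refl => exact ⟨.refl, hu⟩
    | @tail b' c' _ hQbc ih =>
      obtain ⟨hrtg, hbW⟩ := ih
      have hS' : StrictPart R b' c' := by
        rcases hQbc with h' | ⟨hb, _⟩
        · exact h'
        · exact absurd hb hbW
      exact ⟨hrtg.tail hS', hinv _ _ hQbc hbW⟩
  have hQtg : Irreflexive (Relation.TransGen Q) := by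
    intro x hx
    obtain ⟨b, hxb, hbx⟩ := Relation.TransGen.tail'_iff.mp hx
    by_cases hxW : x ∈ W
    · have hbW : b ∈ W := by
        by_contra hbW
        exact hinv _ _ hbx hbW hxW
      obtain ⟨hrtg, _⟩ := claim1 x b hxb hbW
      have hSbx : StrictPart R b x := by
        rcases hbx with h' | ⟨_, hx'⟩
        · exact h'
        · exact absurd hxW hx'
      exact hStg x (Relation.TransGen.tail' hrtg hSbx)
    · obtain ⟨hrtg, hbW⟩ := claim2 x b hxb hxW
      have hSbx : StrictPart R b x := by
        rcases hbx with h' | ⟨hb, _⟩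
        · exact h'
        · exact absurd hb hbW
      exact hStg x (Relation.TransGen.tail' hrtg hSbx)
  obtain ⟨L, hLlin, hLext⟩ := exists_linExt Q hQtg
  refine ⟨L, ⟨hLlin, ?_⟩, hcard, fun x hx y hy => hLext x y (Or.inr ⟨hx, hy⟩)⟩
  intro x y hxy
  by_contra hR
  have hSyx : StrictPart R y x := ⟨(hc x y).resolve_left hR, hR⟩
  have hxy' : x = y := hLlin.2.2 x y hxy (hLext y x (Or.inl hSyx))
  exact hR (hxy' ▸ ((hc x x).elim id id))


/-- For a complete and quasi-acyclic relation `R` and `1 ≤ k ≤ n − 1`,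
`C_k(R)` is the union of the `C_k(L)` over the linear refinements `L` of `R`;
in particular `1 ≤ |C_k(R)| ≤ |𝐋_⋄(R)|` and `C_k(R) ≠ ∅`. -/
theorem stmt18 {V : Type*} [Fintype V] [DecidableEq V]
    (hn : 2 ≤ Fintype.card V)
    (R : V → V → Prop) (hc : CompleteRel R)
    (ha : AcyclicRel (StrictPart R))
    (k : ℕ) (hk1 : 1 ≤ k) (hk2 : k ≤ Fintype.card V - 1) :
    kMaxSets R k = (⋃ L ∈ linRefinements R, kMaxSets L k) ∧
      1 ≤ (kMaxSets R k).ncard ∧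
      (kMaxSets R k).ncard ≤ (linRefinements R).ncard ∧
      (kMaxSets R k).Nonempty := by
  classical
  have hSirr : Irreflexive (StrictPart R) := fun x hx => hx.2 hx.1
  have hUnion : kMaxSets R k = ⋃ L ∈ linRefinements R, kMaxSets L k := by
    ext W
    simp only [Set.mem_iUnion]
    constructor
    · intro hW
      obtain ⟨L, hL, hWL⟩ := exists_refinement_kmax hc ha hW
      exact ⟨L, hL, hWL⟩
    · rintro ⟨L, hL, hcard, hmax⟩
      exact ⟨hcard, fun x hx y hy => hL.2 x y (hmax x hx y hy)⟩
  have hk' : k ≤ Fintype.card V := by omega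
  obtain ⟨L0, hL0lin, hL0ext⟩ :=
    exists_linExt (StrictPart R) (transGen_irrefl_of_acyclic hSirr ha)
  have hL0ref : L0 ∈ linRefinements R := by
    refine ⟨hL0lin, fun x y hxy => ?_⟩
    by_contra hR
    have hxy' : x = y := hL0lin.2.2 x y hxy (hL0ext y x ⟨(hc x y).resolve_left hR, hR⟩)
    exact hR (hxy' ▸ ((hc x x).elim id id))
  obtain ⟨W0, hW0⟩ := linear_exists_kmax L0 hL0lin k hk'
  have hne : (kMaxSets R k).Nonempty :=
    ⟨W0, by rw [hUnion]; exact Set.mem_biUnion hL0ref hW0⟩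
  refine ⟨hUnion, ?_, ?_, hne⟩
  · have := (Set.ncard_pos (Set.toFinite _)).mpr hne
    omega
  · set f : Finset V → (V → V → Prop) := fun W =>
      if h : ∃ L ∈ linRefinements R, W ∈ kMaxSets L k then h.choose else L0 with hf
    have hexists : ∀ W ∈ kMaxSets R k, ∃ L ∈ linRefinements R, W ∈ kMaxSets L k := by
      intro W hW
      exact exists_refinement_kmax hc ha hW
    have hspec : ∀ W ∈ kMaxSets R k, f W ∈ linRefinements R ∧ W ∈ kMaxSets (f W) k := by
      intro W hW
      have hex := hexists W hW
      rw [hf]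
      simp only [dif_pos hex]
      exact hex.choose_spec
    refine Set.ncard_le_ncard_of_injOn f (fun W hW => (hspec W hW).1) ?_ (Set.toFinite _)
    intro W hW W' hW' hff
    exact linear_kmax_unique (hspec W hW).1.1 (hspec W hW).2 (hff ▸ (hspec W' hW').2)
end

section
/- Let V be a finite set of size n ≥ 2 and let R be a complete and quasi-transitive relation on V with R ≠ V². Then for every k ∈ {1,…,n−1}, C_k(R) is not contained in C_k(R^r); that is, there exists a k-maximum set W of R which is not a k-maximum set of the reversal R^r of R. -/
/-- For a complete and quasi-transitive relation `R ≠ V²` and every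
`k ∈ {1,…,n−1}`, `C_k(R)` is not contained in `C_k(R^r)`. -/
theorem stmt19 {V : Type*} [Fintype V] [DecidableEq V]
    (hn : 2 ≤ Fintype.card V)
    (R : V → V → Prop) (hc : CompleteRel R) (hq : QuasiTransitive R)
    (hne : ¬ ∀ x y : V, R x y)
    (k : ℕ) (hk1 : 1 ≤ k) (hk2 : k ≤ Fintype.card V - 1) :
    ¬ kMaxSets R k ⊆ kMaxSets (fun x y => R y x) k := by
  classical
  set P : V → V → Prop := StrictPart R with hPdef
  have hirr : ∀ x, ¬ P x x := fun x h => h.2 h.1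
  have hasym : ∀ {x y}, P x y → P y x → False := fun h1 h2 => h1.2 h2.1
  push_neg at hne
  obtain ⟨a0, b0, hab0⟩ := hne
  have hP0 : P b0 a0 := ⟨(hc b0 a0).resolve_right hab0, hab0⟩
  -- find a P-maximal element b with an out-edge
  set S : Finset V := Finset.univ.filter (fun x => ∃ y, P x y) with hSdef
  have hS : S.Nonempty := ⟨b0, by simp [hSdef]; exact ⟨a0, hP0⟩⟩
  obtain ⟨b, hbS, hbmax⟩ :=
    S.exists_max_image (fun x => (Finset.univ.filter (fun z => P x z)).card) hS
  obtain ⟨a, hba⟩ : ∃ y, P b y := by simpa [hSdef] using hbS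
  have hbtop : ∀ x, ¬ P x b := by
    intro x hxb
    have hxS : x ∈ S := by simp [hSdef]; exact ⟨b, hxb⟩
    have hle := hbmax x hxS
    have hsub : (Finset.univ.filter (fun z => P b z)) ⊆
        (Finset.univ.filter (fun z => P x z)) := by
      intro z hz
      simp only [Finset.mem_filter, Finset.mem_univ, true_and] at hz ⊢
      exact hq hxb hz
    have hss : (Finset.univ.filter (fun z => P b z)) ⊂
        (Finset.univ.filter (fun z => P x z)) := by
      refine (Finset.ssubset_iff_of_subset hsub).2 ⟨b, ?_, ?_⟩
      · simp only [Finset.mem_filter, Finset.mem_univ, true_and]; exact hxb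
      · simp only [Finset.mem_filter, Finset.mem_univ, true_and]; exact hirr b
    exact absurd (Finset.card_lt_card hss) (not_lt.2 hle)
  -- the lower set A as a predicate
  set inA : V → Prop := fun x => P a x ∨ x = a with hinAdef
  have hinAa : inA a := Or.inr rfl
  have hnAb : ¬ inA b := by
    rintro (h | h)
    · exact hasym h hba
    · exact hirr a (h ▸ hba)
  have hAdown : ∀ {x y}, inA x → P x y → inA y := by
    rintro x y (h | rfl) hxy
    · exact Or.inl (hq h hxy)
    · exact Or.inl hxy
  have haMaxA : ∀ {x}, inA x → ¬ P x a := by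
    rintro x (h | rfl) hxa
    · exact hasym h hxa
    · exact hxa.2 hxa.1
  -- the auxiliary strict order Q
  set Q : V → V → Prop := fun x y =>
    P x y ∨ (x = b ∧ y ≠ b) ∨ (¬ inA x ∧ inA y) ∨ (x = a ∧ inA y ∧ y ≠ a) with hQdef
  have hQasym : ∀ {x y}, Q x y → Q y x → False := by
    rintro x y (h1 | ⟨rfl, h1⟩ | ⟨h1, h1'⟩ | ⟨rfl, h1, h1'⟩)
        (h2 | ⟨rfl, h2⟩ | ⟨h2, h2'⟩ | ⟨rfl, h2, h2'⟩)
    · exact hasym h1 h2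
    · exact hbtop x h1
    · exact h2 (hAdown h2' h1)
    · exact haMaxA h2 h1
    · exact hbtop y h2
    · exact h1 rfl
    · exact hnAb h2'
    · exact hnAb h2
    · exact h1 (hAdown h1' h2)
    · exact hnAb h1'
    · exact h1 h2'
    · exact h1 h2
    · exact haMaxA h1 h2
    · exact hnAb h1
    · exact h2 h1
    · exact h1' rfl
  have hQtrans : ∀ {x y z}, Q x y → Q y z → Q x z := by
    rintro x y z (h1 | ⟨hxb, h1⟩ | ⟨h1, h1'⟩ | ⟨hxa, h1, h1'⟩) h2
    · rcases h2 with h2 | ⟨hyb, h2⟩ | ⟨h2, h2'⟩ | ⟨hya, h2, h2'⟩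
      · exact Or.inl (hq h1 h2)
      · exact absurd (hyb ▸ h1) (hbtop x)
      · exact Or.inr (Or.inr (Or.inl ⟨fun hx => h2 (hAdown hx h1), h2'⟩))
      · exact Or.inr (Or.inr (Or.inl ⟨fun hx => haMaxA hx (hya ▸ h1), h2⟩))
    · by_cases hzb : z = b
      · exfalso
        rcases h2 with h2 | ⟨hyb, h2⟩ | ⟨h2, h2'⟩ | ⟨hya, h2, h2'⟩
        · exact hbtop y (hzb ▸ h2)
        · exact h1 hyb
        · exact hnAb (hzb ▸ h2')
        · exact hnAb (hzb ▸ h2)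
      · exact Or.inr (Or.inl ⟨hxb, hzb⟩)
    · rcases h2 with h2 | ⟨hyb, h2⟩ | ⟨h2, h2'⟩ | ⟨hya, h2, h2'⟩
      · exact Or.inr (Or.inr (Or.inl ⟨h1, hAdown h1' h2⟩))
      · exact absurd (hyb ▸ h1') hnAb
      · exact absurd h1' h2
      · exact Or.inr (Or.inr (Or.inl ⟨h1, h2⟩))
    · rcases h2 with h2 | ⟨hyb, h2⟩ | ⟨h2, h2'⟩ | ⟨hya, h2, h2'⟩
      · refine Or.inr (Or.inr (Or.inr ⟨hxa, hAdown h1 h2, fun hz => ?_⟩))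
        exact haMaxA h1 (hz ▸ h2)
      · exact absurd (hyb ▸ h1) hnAb
      · exact absurd h1 h2
      · exact absurd hya h1'
  -- extend to a linear order
  set r : V → V → Prop := fun x y => Q x y ∨ x = y with hrdef
  haveI : IsPartialOrder V r :=
    { refl := fun x => Or.inr rfl
      trans := by
        rintro x y z (h1 | rfl) (h2 | rfl)
        · exact Or.inl (hQtrans h1 h2)
        · exact Or.inl h1
        · exact Or.inl h2
        · exact Or.inr rfl
      antisymm := by
        rintro x y (h1 | rfl) (h2 | h2)
        · exact absurd h2 (fun h => hQasym h1 h)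
        · exact h2.symm
        · rfl
        · rfl }
  obtain ⟨s, hs, hrs⟩ := extend_partialOrder r
  haveI := hs.toIsPartialOrder
  haveI := hs.toTotal
  have hanti : ∀ {x y}, s x y → s y x → x = y := fun h1 h2 => _root_.antisymm h1 h2
  -- sort the universe by s
  set l : List V := Finset.univ.sort s with hldef
  have hlen : l.length = Fintype.card V := by
    simp [hldef]
  have hnd : l.Nodup := Finset.sort_nodup _ s
  have hmem : ∀ x : V, x ∈ l := fun x => (Finset.mem_sort s).2 (Finset.mem_univ x)
  have hsorted : List.Pairwise s l := Finset.pairwise_sort _ _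
  set W : Finset V := (l.take k).toFinset with hWdef
  have hkn : k ≤ l.length := by omega
  have hWcard : W.card = k := by
    rw [hWdef, List.toFinset_card_of_nodup (hnd.sublist (List.take_sublist _ _))]
    simp [hkn]
  -- cross property from sortedness
  have hcross : ∀ x ∈ W, ∀ y ∉ W, s x y ∧ x ≠ y := by
    intro x hx y hy
    have hx' : x ∈ l.take k := List.mem_toFinset.1 hx
    have hy' : y ∈ l.drop k := by
      have := hmem y
      rw [← List.take_append_drop k l, List.mem_append] at this
      rcases this with h | h
      · exact absurd (List.mem_toFinset.2 h) hy
      · exact h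
    have hpw : List.Pairwise s l := hsorted
    rw [← List.take_append_drop k l, List.pairwise_append] at hpw
    have hnd' := hnd
    rw [← List.take_append_drop k l, List.nodup_append] at hnd'
    refine ⟨hpw.2.2 x hx' y hy', ?_⟩
    intro h
    exact hnd'.2.2 x hx' x (h ▸ hy') rfl
  -- W is a k-maximum set for R
  have hWmax : W ∈ kMaxSets R k := by
    refine ⟨hWcard, fun x hx y hy => ?_⟩
    by_contra hR
    have hPyx : P y x := ⟨(hc x y).resolve_left hR, hR⟩
    have hsyx : s y x := hrs _ _ (Or.inl (Or.inl hPyx))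
    obtain ⟨hsxy, hxy⟩ := hcross x hx y hy
    exact hirr x (hanti hsxy hsyx ▸ hPyx)
  -- b belongs to W
  have hbmin : ∀ x, x ≠ b → s b x := fun x hx =>
    hrs _ _ (Or.inl (Or.inr (Or.inl ⟨rfl, hx⟩)))
  have hbW : b ∈ W := by
    by_contra hbW
    have hWne : W.Nonempty := by
      rw [← Finset.card_pos, hWcard]; exact hk1
    obtain ⟨x, hx⟩ := hWne
    obtain ⟨hsxb, hxb⟩ := hcross x hx b hbW
    exact hxb (hanti hsxb (hbmin x hxb))
  -- conclude
  intro hsub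
  have hWrev := hsub hWmax
  obtain ⟨-, hrev⟩ := hWrev
  by_cases haW : a ∈ W
  · have hvex : ∃ v, v ∉ W := by
      by_contra hno
      push_neg at hno
      have : Finset.univ ⊆ W := fun v _ => hno v
      have := Finset.card_le_card this
      rw [Finset.card_univ, hWcard] at this
      omega
    obtain ⟨v, hvW⟩ := hvex
    have hvA : inA v := by
      by_contra hvA
      have hsva : s v a := hrs _ _ (Or.inl (Or.inr (Or.inr (Or.inl ⟨hvA, hinAa⟩))))
      obtain ⟨hsav, hav⟩ := hcross a haW v hvW
      exact hav (hanti hsav hsva)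
    have hva : v ≠ a := fun h => hvW (h ▸ haW)
    have hPav : P a v := hvA.resolve_right hva
    exact hPav.2 (hrev a haW v hvW)
  · exact hba.2 (hrev b hbW a haW)
end
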